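/- arXiv:0905.1879 — 9 statements merged into one kernel-verified Lean document; each statement's English description precedes it below -/
import Mathlib

section
/- Let C be a category with a zero object and an involution * (a contravariant endofunctor which is the identity on objects and involutive on morphisms) such that every morphism f has a Moore–Penrose generalized inverse f^(−1) with respect to *, i.e. f ∘ f^(−1) ∘ f = f, f^(−1) ∘ f ∘ f^(−1) = f^(−1), (f ∘ f^(−1))* = f ∘ f^(−1) and (f^(−1) ∘ f)* = f^(−1) ∘ f. Then C is exact if and only if C is a Baer*-category, every projection of C is closed, and every projection of C can be written as a monomorphism composed with an epimorphism. -/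
open CategoryTheory CategoryTheory.Limits

universe v u

/-- An operation assigning to each morphism a morphism in the opposite direction. -/
def MorphismOp (C : Type u) [Category.{v} C] : Type (max u v) :=
  ∀ {A B : C}, (A ⟶ B) → (B ⟶ A)

variable {C : Type u} [Category.{v} C]

/-- `s` is an involution: a contravariant endofunctor which is the identity on objects
and involutive on morphisms. -/
def IsInvolution (s : MorphismOp C) : Prop :=
  (∀ {A B D : C} (f : A ⟶ B) (g : B ⟶ D), s (f ≫ g) = s g ≫ s f) ∧
  (∀ A : C, s (𝟙 A) = 𝟙 A) ∧
  (∀ {A B : C} (f : A ⟶ B), s (s f) = f)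

/-- A projection on `A` is an idempotent endomorphism fixed by the involution `s`. -/
def IsProjection (s : MorphismOp C) {A : C} (i : A ⟶ A) : Prop :=
  i ≫ i = i ∧ s i = i

/-- `g` is a Moore–Penrose generalized inverse of `f` with respect to `s`:
`f g f = f`, `g f g = g`, `(f g)* = f g`, `(g f)* = g f`. -/
def IsMoorePenrose (s : MorphismOp C) {A B : C} (f : A ⟶ B) (g : B ⟶ A) : Prop :=
  f ≫ g ≫ f = f ∧ g ≫ f ≫ g = g ∧ s (f ≫ g) = f ≫ g ∧ s (g ≫ f) = g ≫ f

/-- `inv` makes `C` an inverse category: each morphism `f` has `inv f` as its unique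
generalized inverse (`f ∘ (inv f) ∘ f = f` and `(inv f) ∘ f ∘ (inv f) = inv f`). -/
def IsInverseOp (inv : MorphismOp C) : Prop :=
  ∀ {A B : C} (f : A ⟶ B),
    (f ≫ inv f ≫ f = f ∧ inv f ≫ f ≫ inv f = inv f) ∧
    ∀ g : B ⟶ A, f ≫ g ≫ f = f → g ≫ f ≫ g = g → g = inv f

/-- `u` is a kernel of `f`. -/
def IsKernelOf [HasZeroMorphisms C] {K A B : C} (u : K ⟶ A) (f : A ⟶ B) : Prop :=
  u ≫ f = 0 ∧ ∀ {X : C} (g : X ⟶ A), g ≫ f = 0 → ∃! h : X ⟶ K, h ≫ u = g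

/-- `v` is a cokernel of `f`. -/
def IsCokernelOf [HasZeroMorphisms C] {A B Q : C} (v : B ⟶ Q) (f : A ⟶ B) : Prop :=
  f ≫ v = 0 ∧ ∀ {X : C} (g : B ⟶ X), f ≫ g = 0 → ∃! h : Q ⟶ X, v ≫ h = g

/-- An exact category (in the sense of the paper): a category with a zero object,
kernels and cokernels, in which every monomorphism is a kernel, every epimorphism is a
cokernel, and every morphism factors as a monomorphism composed with an epimorphism. -/
structure IsExactCategory (C : Type u) [Category.{v} C] [HasZeroObject C]
    [HasZeroMorphisms C] : Prop where
  hasKernels : ∀ {A B : C} (f : A ⟶ B), ∃ (K : C) (u : K ⟶ A), IsKernelOf u f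
  hasCokernels : ∀ {A B : C} (f : A ⟶ B), ∃ (Q : C) (v : B ⟶ Q), IsCokernelOf v f
  normal : ∀ {X A : C} (u : X ⟶ A), Mono u → ∃ (B : C) (f : A ⟶ B), IsKernelOf u f
  conormal : ∀ {A B : C} (v : A ⟶ B), Epi v → ∃ (X : C) (f : X ⟶ A), IsCokernelOf v f
  monoEpiFact : ∀ {A B : C} (f : A ⟶ B),
    ∃ (I : C) (q : A ⟶ I) (p : I ⟶ B), Epi q ∧ Mono p ∧ q ≫ p = f

/-- A Baer*-structure on `C` with respect to `s`: each morphism `f` has a projection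
`f′ = prj f` on its domain with `f ∘ g = 0` iff `g` factors through `f′`. -/
structure BaerStar (C : Type u) [Category.{v} C] [HasZeroObject C] [HasZeroMorphisms C]
    (s : MorphismOp C) where
  prj : ∀ {A B : C}, (A ⟶ B) → (A ⟶ A)
  prj_isProjection : ∀ {A B : C} (f : A ⟶ B), IsProjection s (prj f)
  prj_spec : ∀ {A B X : C} (f : A ⟶ B) (g : X ⟶ A),
    g ≫ f = 0 ↔ ∃ h : X ⟶ A, g = h ≫ prj f

/-- The natural partial order on projections: `e ≤ f` iff `e = e ∘ f`. -/
def ProjLe {A : C} (e f : A ⟶ A) : Prop := f ≫ e = e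

/-- `p` is the image of `g`: the smallest subobject of the codomain of `g` through
which `g` factors. -/
def IsImageOf {A B I : C} (p : I ⟶ B) (g : A ⟶ B) : Prop :=
  Mono p ∧ (∃ t : A ⟶ I, t ≫ p = g) ∧
  ∀ {S : C} (t : A ⟶ S) (m : S ⟶ B), Mono m → t ≫ m = g → ∃ w : I ⟶ S, w ≫ m = p

section Stmt0Aux

set_option linter.unusedSectionVars false

variable [HasZeroObject C] [HasZeroMorphisms C]

lemma stmt0_s_zero {s : MorphismOp C} (hs : IsInvolution s) {A B : C} :
    s (0 : A ⟶ B) = 0 := by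
  have hC : ∀ {A B D : C} (f : A ⟶ B) (g : B ⟶ D), s (f ≫ g) = s g ≫ s f :=
    fun f g => hs.1 f g
  obtain ⟨Z, hZ⟩ := HasZeroObject.zero (C := C)
  have h1 : (0 : A ⟶ B) = (0 : A ⟶ Z) ≫ (0 : Z ⟶ B) := by simp
  rw [h1, hC]
  have h2 : s (0 : Z ⟶ B) = 0 := hZ.eq_of_tgt _ _
  rw [h2, zero_comp]

lemma stmt0_dual_kernel {s : MorphismOp C} (hs : IsInvolution s) {K B D : C}
    {m : K ⟶ B} {g : B ⟶ D} (h : IsKernelOf m g) : IsCokernelOf (s m) (s g) := by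
  have hC : ∀ {A B D : C} (f : A ⟶ B) (g : B ⟶ D), s (f ≫ g) = s g ≫ s f :=
    fun f g => hs.1 f g
  have hI : ∀ {A B : C} (f : A ⟶ B), s (s f) = f := fun f => hs.2.2 f
  obtain ⟨h0, huniv⟩ := h
  constructor
  · calc s g ≫ s m = s (m ≫ g) := (hC m g).symm
      _ = s 0 := by rw [h0]
      _ = 0 := stmt0_s_zero hs
  · intro X x hx
    have e1 : s x ≫ g = 0 := by
      have e0 : s x ≫ g = s (s g ≫ x) := by rw [hC, hI]
      rw [e0, hx, stmt0_s_zero hs]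
    obtain ⟨h', hh', hun⟩ := huniv (s x) e1
    refine ⟨s h', ?_, ?_⟩
    · show s m ≫ s h' = x
      rw [← hC, hh', hI]
    · intro y hy
      have hy' : s m ≫ y = x := hy
      have e2 : s y ≫ m = s x := by
        rw [← hy', hC, hI]
      rw [← hI y, hun (s y) e2]

lemma stmt0_split_of_fact {A I : C} {i : A ⟶ A} (hi : i ≫ i = i) {q : A ⟶ I} {p : I ⟶ A}
    (hq : Epi q) (hp : Mono p) (hqp : q ≫ p = i) : p ≫ q = 𝟙 I := by
  haveI := hq; haveI := hp
  apply (cancel_epi q).1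
  apply (cancel_mono p).1
  calc (q ≫ (p ≫ q)) ≫ p = (q ≫ p) ≫ (q ≫ p) := by simp only [Category.assoc]
    _ = i ≫ i := by rw [hqp]
    _ = i := hi
    _ = (q ≫ 𝟙 I) ≫ p := by rw [Category.comp_id, hqp]

lemma stmt0_prj_spec_aux {s : MorphismOp C}
    {A B X : C} {f : A ⟶ B} {K : C} {u : K ⟶ A} (hu : IsKernelOf u f)
    {u' : A ⟶ K} (hu' : IsMoorePenrose s u u') (g : X ⟶ A) :
    g ≫ f = 0 ↔ ∃ h : X ⟶ A, g = h ≫ (u' ≫ u) := by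
  constructor
  · intro hg
    obtain ⟨h, hh, _⟩ := hu.2 g hg
    refine ⟨g, ?_⟩
    rw [← hh, Category.assoc, hu'.1]
  · rintro ⟨h, rfl⟩
    rw [Category.assoc, Category.assoc, hu.1, comp_zero, comp_zero]

lemma stmt0_closed_aux {s : MorphismOp C}
    (hs : IsInvolution s) (hE : IsExactCategory C)
    {A : C} {i : A ⟶ A} (hi : IsProjection s i)
    {K : C} {u : K ⟶ A} (hu : IsKernelOf u i)
    {u' : A ⟶ K} (hu' : IsMoorePenrose s u u')
    {L : C} {v : L ⟶ A} (hv : IsKernelOf v (u' ≫ u))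
    {v' : A ⟶ L} (hv' : IsMoorePenrose s v v') :
    v' ≫ v = i := by
  have hC : ∀ {A B D : C} (f : A ⟶ B) (g : B ⟶ D), s (f ≫ g) = s g ≫ s f :=
    fun f g => hs.1 f g
  have hI : ∀ {A B : C} (f : A ⟶ B), s (s f) = f := fun f => hs.2.2 f
  have hsi : s i = i := hi.2
  have hsuu : s (u' ≫ u) = u' ≫ u := hu'.2.2.2
  have hsvv : s (v' ≫ v) = v' ≫ v := hv'.2.2.2
  have huuu : u ≫ u' ≫ u = u := hu'.1
  have hvvv : v ≫ v' ≫ v = v := hv'.1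
  have hui : u ≫ i = 0 := hu.1
  have hei : (u' ≫ u) ≫ i = 0 := by rw [Category.assoc, hui, comp_zero]
  have hie : i ≫ u' ≫ u = 0 := by
    have h := congrArg s hei
    rw [hC, hsi, hsuu, stmt0_s_zero hs] at h
    exact h
  obtain ⟨a, ha, _⟩ := hv.2 i hie
  have hij : i ≫ v' ≫ v = i := by
    rw [← ha, Category.assoc, hvvv]
  have h1 : (u' ≫ u) ≫ s v = 0 := by
    have h := congrArg s hv.1
    rw [hC, hsuu, stmt0_s_zero hs] at h
    exact h
  have h2 : u ≫ s v = 0 := by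
    have e : u ≫ s v = u ≫ (u' ≫ u) ≫ s v := by
      rw [← Category.assoc, huuu]
    rw [e, h1, comp_zero]
  have h3 : v ≫ s u = 0 := by
    have h := congrArg s h2
    rw [hC, hI, stmt0_s_zero hs] at h
    exact h
  obtain ⟨I, q, m, hq, hm, hqm⟩ := hE.monoEpiFact i
  have hmq : m ≫ q = 𝟙 I := stmt0_split_of_fact hi.1 hq hm hqm
  obtain ⟨B', f, hf⟩ := hE.normal m hm
  have hif : i ≫ f = 0 := by
    rw [← hqm, Category.assoc, hf.1, comp_zero]
  have hsf : s f ≫ i = 0 := by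
    have h := congrArg s hif
    rw [hC, hsi, stmt0_s_zero hs] at h
    exact h
  obtain ⟨h, hh, _⟩ := hu.2 (s f) hsf
  have hfeq : f = s u ≫ s h := by
    rw [← hC, hh, hI]
  have hvf : v ≫ f = 0 := by
    rw [hfeq, ← Category.assoc, h3, zero_comp]
  obtain ⟨t, ht, _⟩ := hf.2 v hvf
  have hvi : v ≫ i = v := by
    rw [← hqm, ← ht]
    calc (t ≫ m) ≫ q ≫ m = t ≫ (m ≫ q) ≫ m := by simp only [Category.assoc]
      _ = t ≫ m := by rw [hmq, Category.id_comp]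
  have hji : (v' ≫ v) ≫ i = v' ≫ v := by
    rw [Category.assoc, hvi]
  have hij2 : i ≫ v' ≫ v = v' ≫ v := by
    have h := congrArg s hji
    rw [hC, hsi, hsvv] at h
    exact h
  rw [← hij2, hij]

lemma stmt0_exact_of_baer {s : MorphismOp C}
    (hs : IsInvolution s)
    (hmp : ∀ {A B : C} (f : A ⟶ B), ∃ g : B ⟶ A, IsMoorePenrose s f g)
    (Bs : BaerStar C s)
    (hcl : ∀ {A : C} (i : A ⟶ A), IsProjection s i → Bs.prj (Bs.prj i) = i)
    (hfac : ∀ {A : C} (i : A ⟶ A), IsProjection s i →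
      ∃ (I : C) (q : A ⟶ I) (p : I ⟶ A), Epi q ∧ Mono p ∧ q ≫ p = i) :
    IsExactCategory C := by
  have hC : ∀ {A B D : C} (f : A ⟶ B) (g : B ⟶ D), s (f ≫ g) = s g ≫ s f :=
    fun f g => hs.1 f g
  have hI : ∀ {A B : C} (f : A ⟶ B), s (s f) = f := fun f => hs.2.2 f
  have hprj0 : ∀ {A B : C} (f : A ⟶ B), Bs.prj f ≫ f = 0 := by
    intro A B f
    exact (Bs.prj_spec f (Bs.prj f)).2 ⟨Bs.prj f, (Bs.prj_isProjection f).1.symm⟩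
  have hker : ∀ {A B : C} (f : A ⟶ B), ∃ (K : C) (u : K ⟶ A), IsKernelOf u f := by
    intro A B f
    obtain ⟨I, q, p, hq, hp, hqp⟩ := hfac (Bs.prj f) (Bs.prj_isProjection f)
    haveI := hq; haveI := hp
    have hpf : p ≫ f = 0 := by
      apply (cancel_epi q).1
      rw [comp_zero, ← Category.assoc, hqp, hprj0]
    refine ⟨I, p, hpf, ?_⟩
    intro X g hg
    obtain ⟨h, hh⟩ := (Bs.prj_spec f g).1 hg
    refine ⟨h ≫ q, ?_, ?_⟩
    · show (h ≫ q) ≫ p = g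
      rw [Category.assoc, hqp, ← hh]
    · intro y hy
      have hy' : y ≫ p = g := hy
      apply (cancel_mono p).1
      rw [hy', Category.assoc, hqp, ← hh]
  have hnormal : ∀ {X A : C} (u : X ⟶ A), Mono u →
      ∃ (B : C) (f : A ⟶ B), IsKernelOf u f := by
    intro X A u hu
    haveI := hu
    obtain ⟨u', hu'⟩ := hmp u
    have huuu : u ≫ u' ≫ u = u := hu'.1
    have h1 : u ≫ u' = 𝟙 X := by
      apply (cancel_mono u).1
      rw [Category.assoc, huuu, Category.id_comp]
    have hip : IsProjection s (u' ≫ u) := by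
      constructor
      · rw [Category.assoc, huuu]
      · exact hu'.2.2.2
    refine ⟨A, Bs.prj (u' ≫ u), ?_, ?_⟩
    · apply (Bs.prj_spec (Bs.prj (u' ≫ u)) u).2
      refine ⟨u, ?_⟩
      rw [hcl _ hip, ← Category.assoc, h1, Category.id_comp]
    · intro Y g hg
      obtain ⟨h, hh⟩ := (Bs.prj_spec (Bs.prj (u' ≫ u)) g).1 hg
      rw [hcl _ hip] at hh
      refine ⟨h ≫ u', ?_, ?_⟩
      · show (h ≫ u') ≫ u = g
        rw [Category.assoc]
        exact hh.symm
      · intro y hy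
        have hy' : y ≫ u = g := hy
        apply (cancel_mono u).1
        rw [hy', Category.assoc]
        exact hh
  refine ⟨hker, ?_, hnormal, ?_, ?_⟩
  · intro A B f
    obtain ⟨K, m, hm⟩ := hker (s f)
    have h := stmt0_dual_kernel hs hm
    rw [hI] at h
    exact ⟨K, s m, h⟩
  · intro A B v hv
    haveI := hv
    have hmono : Mono (s v) := by
      constructor
      intro Z a b hab
      have h2 : v ≫ s a = v ≫ s b := by
        have h := congrArg s hab
        rw [hC, hC, hI] at h
        exact h
      have h3 := (cancel_epi v).1 h2
      have h4 := congrArg s h3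
      rwa [hI, hI] at h4
    obtain ⟨B2, k, hk⟩ := hnormal (s v) hmono
    have h := stmt0_dual_kernel hs hk
    rw [hI] at h
    exact ⟨B2, s k, h⟩
  · intro A B f
    obtain ⟨f', hf'⟩ := hmp f
    have hfff : f ≫ f' ≫ f = f := hf'.1
    have hdp : IsProjection s (f' ≫ f) := by
      constructor
      · rw [Category.assoc, hfff]
      · exact hf'.2.2.2
    obtain ⟨I, q, p, hq, hp, hqp⟩ := hfac (f' ≫ f) hdp
    haveI := hq; haveI := hp
    have hpq : p ≫ q = 𝟙 I := stmt0_split_of_fact hdp.1 hq hp hqp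
    have hdq : (f' ≫ f) ≫ q = q := by
      rw [← hqp, Category.assoc, hpq, Category.comp_id]
    refine ⟨I, f ≫ q, p, ?_, hp, ?_⟩
    · constructor
      intro Z a b hab
      have h2 : f' ≫ (f ≫ q) ≫ a = f' ≫ (f ≫ q) ≫ b := by rw [hab]
      have h3 : ((f' ≫ f) ≫ q) ≫ a = ((f' ≫ f) ≫ q) ≫ b := by
        simpa only [Category.assoc] using h2
      rw [hdq] at h3
      exact (cancel_epi q).1 h3
    · rw [Category.assoc, hqp, hfff]

end Stmt0Aux

/-- A category with zero object, an involution `*`, and Moore–Penrose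
generalized inverses is exact iff it is a Baer*-category with closed projections in which
every projection factors as a monomorphism composed with an epimorphism. -/
theorem stmt0 [HasZeroObject C] [HasZeroMorphisms C] (s : MorphismOp C)
    (hs : IsInvolution s)
    (hmp : ∀ {A B : C} (f : A ⟶ B), ∃ g : B ⟶ A, IsMoorePenrose s f g) :
    IsExactCategory C ↔
      ∃ Bs : BaerStar C s,
        (∀ {A : C} (i : A ⟶ A), IsProjection s i → Bs.prj (Bs.prj i) = i) ∧
        (∀ {A : C} (i : A ⟶ A), IsProjection s i →
          ∃ (I : C) (q : A ⟶ I) (p : I ⟶ A), Epi q ∧ Mono p ∧ q ≫ p = i) := by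
  constructor
  · intro hE
    refine ⟨⟨fun {A B} f =>
        (hmp (hE.hasKernels f).choose_spec.choose).choose ≫
          (hE.hasKernels f).choose_spec.choose, ?_, ?_⟩, ?_, ?_⟩
    · intro A B f
      have hu' := (hmp (hE.hasKernels f).choose_spec.choose).choose_spec
      have huuu := hu'.1
      constructor
      · show (_ ≫ _) ≫ (_ ≫ _) = _ ≫ _
        rw [Category.assoc, huuu]
      · exact hu'.2.2.2
    · intro A B X f g
      exact stmt0_prj_spec_aux (hE.hasKernels f).choose_spec.choose_spec
        (hmp (hE.hasKernels f).choose_spec.choose).choose_spec g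
    · intro A i hi
      exact stmt0_closed_aux hs hE hi
        (hE.hasKernels i).choose_spec.choose_spec
        (hmp (hE.hasKernels i).choose_spec.choose).choose_spec
        (hE.hasKernels ((hmp (hE.hasKernels i).choose_spec.choose).choose ≫
          (hE.hasKernels i).choose_spec.choose)).choose_spec.choose_spec
        (hmp _).choose_spec
    · intro A i _
      exact hE.monoEpiFact i
  · rintro ⟨Bs, hcl, hfac⟩
    exact stmt0_exact_of_baer hs hmp Bs hcl hfac
end

section
/- Let C be an exact category with an involution * in which every morphism has a Moore–Penrose generalized inverse with respect to *. For every morphism f with domain A, let u = ker f be a kernel of f and set i = u ∘ u^(−1), where u^(−1) is the Moore–Penrose inverse of u. Then i is a projection on A, and for every morphism g into A one has f ∘ g = 0 if and only if g = i ∘ h for some morphism h. In particular, C is a Baer*-category with f′ = ker f ∘ (ker f)^(−1). -/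
open CategoryTheory CategoryTheory.Limits

universe v u

variable {C : Type u} [Category.{v} C]

theorem stmt1_key [HasZeroMorphisms C] (s : MorphismOp C) (mp : MorphismOp C)
    (hmp : ∀ {A B : C} (f : A ⟶ B), IsMoorePenrose s f (mp f))
    {A B K : C} (f : A ⟶ B) (u : K ⟶ A) (hu : IsKernelOf u f) :
    IsProjection s (mp u ≫ u) ∧
      ∀ {X : C} (g : X ⟶ A), g ≫ f = 0 ↔ ∃ h : X ⟶ A, g = h ≫ (mp u ≫ u) := by
  obtain ⟨h1, h2, h3, h4⟩ := hmp u
  constructor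
  · constructor
    · simp only [Category.assoc, h1]
    · exact h4
  · intro X g
    constructor
    · intro hg
      obtain ⟨h, hh, -⟩ := hu.2 g hg
      refine ⟨h ≫ u, ?_⟩
      rw [← hh]
      simp only [Category.assoc, h1]
    · rintro ⟨h, rfl⟩
      rw [Category.assoc, Category.assoc, hu.1]
      simp

/-- In an exact category with involution and Moore–Penrose inverses,
for any morphism `f` with kernel `u`, the morphism `i = u ∘ u⁻¹` is a projection and
`f ∘ g = 0` iff `g` factors through `i`; in particular `C` is a Baer*-category with
`f′ = ker f ∘ (ker f)⁻¹`. -/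
theorem stmt1 [HasZeroObject C] [HasZeroMorphisms C] (s : MorphismOp C)
    (hs : IsInvolution s) (mp : MorphismOp C)
    (hmp : ∀ {A B : C} (f : A ⟶ B), IsMoorePenrose s f (mp f))
    (hC : IsExactCategory C)
    {A B K : C} (f : A ⟶ B) (u : K ⟶ A) (hu : IsKernelOf u f) :
    (IsProjection s (mp u ≫ u) ∧
      ∀ {X : C} (g : X ⟶ A), g ≫ f = 0 ↔ ∃ h : X ⟶ A, g = h ≫ (mp u ≫ u)) ∧
    Nonempty (BaerStar C s) := by
  refine ⟨stmt1_key s mp hmp f u hu, ⟨?_⟩⟩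
  exact
    { prj := fun {A B} f =>
        mp (hC.hasKernels f).choose_spec.choose ≫ (hC.hasKernels f).choose_spec.choose
      prj_isProjection := fun {A B} f =>
        (stmt1_key s mp hmp f _ (hC.hasKernels f).choose_spec.choose_spec).1
      prj_spec := fun {A B X} f g =>
        (stmt1_key s mp hmp f _ (hC.hasKernels f).choose_spec.choose_spec).2 g }
end

section
/- Let C be a Baer*-category in which every morphism has a Moore–Penrose generalized inverse with respect to the involution *, every projection is closed, and every projection can be written as a monomorphism composed with an epimorphism. Let f be a morphism of C. If f′ = p₁ ∘ q₁ is a factorization with p₁ a monomorphism and q₁ an epimorphism, then p₁ is a kernel of f; if (f*)′ = p₂ ∘ q₂ is a factorization with p₂ a monomorphism and q₂ an epimorphism, then q₂ is a cokernel of f. -/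
open CategoryTheory CategoryTheory.Limits

universe v u

variable {C : Type u} [Category.{v} C]

/-- In a Baer*-category with Moore–Penrose inverses, closed projections
and mono-epi factorizations of projections: if `f′ = p₁ ∘ q₁` (p₁ mono, q₁ epi) then `p₁`
is a kernel of `f`; if `(f*)′ = p₂ ∘ q₂` (p₂ mono, q₂ epi) then `q₂` is a cokernel of `f`. -/
theorem stmt3 [HasZeroObject C] [HasZeroMorphisms C] (s : MorphismOp C)
    (hs : IsInvolution s) (mp : MorphismOp C)
    (hmp : ∀ {A B : C} (f : A ⟶ B), IsMoorePenrose s f (mp f))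
    (Bs : BaerStar C s)
    (hclosed : ∀ {A : C} (i : A ⟶ A), IsProjection s i → Bs.prj (Bs.prj i) = i)
    (hfact : ∀ {A : C} (i : A ⟶ A), IsProjection s i →
      ∃ (I : C) (q : A ⟶ I) (p : I ⟶ A), Epi q ∧ Mono p ∧ q ≫ p = i)
    {A B : C} (f : A ⟶ B) :
    (∀ {I₁ : C} (q₁ : A ⟶ I₁) (p₁ : I₁ ⟶ A), Epi q₁ → Mono p₁ →
      q₁ ≫ p₁ = Bs.prj f → IsKernelOf p₁ f) ∧
    (∀ {I₂ : C} (q₂ : B ⟶ I₂) (p₂ : I₂ ⟶ B), Epi q₂ → Mono p₂ →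
      q₂ ≫ p₂ = Bs.prj (s f) → IsCokernelOf q₂ f) := by
  have scomp : ∀ {A B D : C} (f : A ⟶ B) (g : B ⟶ D), s (f ≫ g) = s g ≫ s f := hs.1
  have sinv : ∀ {A B : C} (f : A ⟶ B), s (s f) = f := hs.2.2
  have szero : ∀ {X Y : C}, s (0 : X ⟶ Y) = 0 := by
    intro X Y
    obtain ⟨Z, hZ⟩ := HasZeroObject.zero (C := C)
    have h0 : (0 : X ⟶ Y) = (0 : X ⟶ Z) ≫ (0 : Z ⟶ Y) := by simp
    rw [h0, scomp, hZ.eq_zero_of_tgt (s (0 : Z ⟶ Y)), zero_comp]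
  constructor
  · intro I₁ q₁ p₁ hq hp hfac
    have h1 : Bs.prj f ≫ f = 0 :=
      (Bs.prj_spec f (Bs.prj f)).mpr ⟨𝟙 A, (Category.id_comp _).symm⟩
    have h2 : p₁ ≫ f = 0 := by
      apply hq.left_cancellation
      rw [← Category.assoc, hfac, h1, comp_zero]
    refine ⟨h2, fun {X} g hg => ?_⟩
    obtain ⟨h, hh⟩ := (Bs.prj_spec f g).mp hg
    refine ⟨h ≫ q₁, ?_, fun y hy => ?_⟩
    · show (h ≫ q₁) ≫ p₁ = g
      rw [Category.assoc, hfac, ← hh]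
    · apply hp.right_cancellation
      rw [hy, Category.assoc, hfac, ← hh]
  · intro I₂ q₂ p₂ hq hp hfac
    have eproj := Bs.prj_isProjection (s f)
    have eidem : Bs.prj (s f) ≫ Bs.prj (s f) = Bs.prj (s f) := eproj.1
    have estar : s (Bs.prj (s f)) = Bs.prj (s f) := eproj.2
    have h0 : Bs.prj (s f) ≫ s f = 0 :=
      (Bs.prj_spec (s f) (Bs.prj (s f))).mpr ⟨𝟙 B, (Category.id_comp _).symm⟩
    have h1 : f ≫ Bs.prj (s f) = 0 := by
      have h' : s (Bs.prj (s f) ≫ s f) = s (0 : B ⟶ A) := by rw [h0]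
      rwa [scomp, sinv, estar, szero] at h'
    have h2 : f ≫ q₂ = 0 := by
      apply hp.right_cancellation
      rw [Category.assoc, hfac, h1, zero_comp]
    refine ⟨h2, fun {X} g hg => ?_⟩
    have hsg : s g ≫ s f = 0 := by rw [← scomp, hg, szero]
    obtain ⟨h, hh⟩ := (Bs.prj_spec (s f) (s g)).mp hsg
    have hsge : s g ≫ Bs.prj (s f) = s g := by
      conv_lhs => rw [hh]
      rw [Category.assoc, eidem, ← hh]
    have hge : Bs.prj (s f) ≫ g = g := by
      have h' : s (s g ≫ Bs.prj (s f)) = s (s g) := by rw [hsge]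
      rwa [scomp, estar, sinv] at h'
    refine ⟨p₂ ≫ g, ?_, fun y hy => ?_⟩
    · show q₂ ≫ p₂ ≫ g = g
      rw [← Category.assoc, hfac, hge]
    · apply hq.left_cancellation
      rw [hy, ← Category.assoc, hfac, hge]
end

section
/- Let C be a Baer*-category in which every morphism has a Moore–Penrose generalized inverse with respect to the involution *, every projection is closed, and every projection can be written as a monomorphism composed with an epimorphism. Then every monomorphism u of C is a kernel of the projection (u*)′, and every epimorphism v of C is a cokernel of the projection v′. In particular C is normal and conormal. -/
open CategoryTheory CategoryTheory.Limits

universe v u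

variable {C : Type u} [Category.{v} C]

theorem s_zero' [HasZeroObject C] [HasZeroMorphisms C] {s : MorphismOp C}
    (hs : IsInvolution s) {A X : C} : s (0 : A ⟶ X) = 0 := by
  have hcomp : ∀ {A B D : C} (f : A ⟶ B) (g : B ⟶ D), s (f ≫ g) = s g ≫ s f :=
    fun f g => hs.1 f g
  obtain ⟨Z, hZ⟩ := HasZeroObject.zero (C := C)
  have h : (0 : A ⟶ X) = (0 : A ⟶ Z) ≫ (0 : Z ⟶ X) := by simp
  rw [h, hcomp]
  rw [hZ.eq_zero_of_src (s (0 : A ⟶ Z))]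
  simp

theorem prj_comp_self' [HasZeroObject C] [HasZeroMorphisms C] {s : MorphismOp C}
    (Bs : BaerStar C s) {A B : C} (f : A ⟶ B) : Bs.prj f ≫ f = 0 :=
  (Bs.prj_spec f (Bs.prj f)).mpr ⟨Bs.prj f, ((Bs.prj_isProjection f).1).symm⟩

theorem comp_prj_iff' [HasZeroObject C] [HasZeroMorphisms C] {s : MorphismOp C}
    (Bs : BaerStar C s) {A B X : C} (f : A ⟶ B) (g : X ⟶ A) :
    g ≫ Bs.prj f = g ↔ g ≫ f = 0 := by
  constructor
  · intro h
    exact (Bs.prj_spec f g).mpr ⟨g, h.symm⟩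
  · intro h
    obtain ⟨k, hk⟩ := (Bs.prj_spec f g).mp h
    rw [hk, Category.assoc, (Bs.prj_isProjection f).1]

theorem key' [HasZeroObject C] [HasZeroMorphisms C] {s : MorphismOp C}
    (hs : IsInvolution s) (mp : MorphismOp C)
    (hmp : ∀ {A B : C} (f : A ⟶ B), IsMoorePenrose s f (mp f))
    (Bs : BaerStar C s)
    (hclosed : ∀ {A : C} (i : A ⟶ A), IsProjection s i → Bs.prj (Bs.prj i) = i)
    {X A : C} (u : X ⟶ A) :
    u ≫ Bs.prj (s u) = 0 ∧
      ∀ {Y : C} (g : Y ⟶ A), g ≫ Bs.prj (s u) = 0 → ∃ h : Y ⟶ X, g = h ≫ u := by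
  have hcomp : ∀ {A B D : C} (f : A ⟶ B) (g : B ⟶ D), s (f ≫ g) = s g ≫ s f :=
    fun f g => hs.1 f g
  have hinv : ∀ {A B : C} (f : A ⟶ B), s (s f) = f := fun f => hs.2.2 f
  obtain ⟨h1, h2, h3, h4⟩ := hmp u
  have h4' : s (mp u ≫ u) = mp u ≫ u := h4
  have hsp1 : s (Bs.prj (s u)) = Bs.prj (s u) := (Bs.prj_isProjection (s u)).2
  have hsp2 : s (Bs.prj (mp u ≫ u)) = Bs.prj (mp u ≫ u) :=
    (Bs.prj_isProjection (mp u ≫ u)).2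
  -- e := mp u ≫ u is a projection
  have heproj : IsProjection s (mp u ≫ u) := by
    constructor
    · have : (mp u ≫ u) ≫ mp u ≫ u = mp u ≫ u ≫ mp u ≫ u := by
        simp only [Category.assoc]
      rw [this, h1]
    · exact h4
  have eq1 : mp u ≫ u = s u ≫ s (mp u) := by rw [← h4', hcomp]
  have eq2 : (mp u ≫ u) ≫ s u = s u := by
    conv_rhs => rw [← h1]
    rw [hcomp, h4']
  -- the key equivalence
  have hiff : ∀ {Y : C} (g : Y ⟶ A), (g ≫ s u = 0 ↔ g ≫ (mp u ≫ u) = 0) := by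
    intro Y g
    constructor
    · intro h
      rw [eq1, ← Category.assoc, h, zero_comp]
    · intro h
      rw [← eq2, ← Category.assoc, h, zero_comp]
  have hp1p2 : Bs.prj (s u) ≫ Bs.prj (mp u ≫ u) = Bs.prj (s u) :=
    (comp_prj_iff' Bs _ _).mpr ((hiff _).mp (prj_comp_self' Bs (s u)))
  have hp2p1 : Bs.prj (mp u ≫ u) ≫ Bs.prj (s u) = Bs.prj (mp u ≫ u) :=
    (comp_prj_iff' Bs _ _).mpr ((hiff _).mpr (prj_comp_self' Bs (mp u ≫ u)))
  have peq : Bs.prj (s u) = Bs.prj (mp u ≫ u) := by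
    have h5 := congrArg s hp1p2
    rw [hcomp, hsp1, hsp2, hp2p1] at h5
    exact h5.symm
  have hcc : Bs.prj (Bs.prj (s u)) = mp u ≫ u := by
    rw [peq]; exact hclosed _ heproj
  constructor
  · refine (Bs.prj_spec (Bs.prj (s u)) u).mpr ⟨u, ?_⟩
    rw [hcc]; exact h1.symm
  · intro Y g hg
    obtain ⟨h, hh⟩ := (Bs.prj_spec (Bs.prj (s u)) g).mp hg
    rw [hcc] at hh
    exact ⟨h ≫ mp u, by rw [hh]; simp only [Category.assoc]⟩

/-- In a Baer*-category with Moore–Penrose inverses, closed projections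
and mono-epi factorizations of projections: every monomorphism `u` is a kernel of `(u*)′`
and every epimorphism `v` is a cokernel of `v′`; in particular the category is normal and
conormal. -/
theorem stmt4 [HasZeroObject C] [HasZeroMorphisms C] (s : MorphismOp C)
    (hs : IsInvolution s) (mp : MorphismOp C)
    (hmp : ∀ {A B : C} (f : A ⟶ B), IsMoorePenrose s f (mp f))
    (Bs : BaerStar C s)
    (hclosed : ∀ {A : C} (i : A ⟶ A), IsProjection s i → Bs.prj (Bs.prj i) = i)
    (hfact : ∀ {A : C} (i : A ⟶ A), IsProjection s i →
      ∃ (I : C) (q : A ⟶ I) (p : I ⟶ A), Epi q ∧ Mono p ∧ q ≫ p = i) :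
    (∀ {X A : C} (u : X ⟶ A), Mono u → IsKernelOf u (Bs.prj (s u))) ∧
    (∀ {A B : C} (v : A ⟶ B), Epi v → IsCokernelOf v (Bs.prj v)) ∧
    (∀ {X A : C} (u : X ⟶ A), Mono u → ∃ (B : C) (g : A ⟶ B), IsKernelOf u g) ∧
    (∀ {A B : C} (v : A ⟶ B), Epi v → ∃ (X : C) (g : X ⟶ A), IsCokernelOf v g) := by
  have hcomp : ∀ {A B D : C} (f : A ⟶ B) (g : B ⟶ D), s (f ≫ g) = s g ≫ s f :=
    fun f g => hs.1 f g
  have hinv : ∀ {A B : C} (f : A ⟶ B), s (s f) = f := fun f => hs.2.2 f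
  have hker : ∀ {X A : C} (u : X ⟶ A), Mono u → IsKernelOf u (Bs.prj (s u)) := by
    intro X A u hu
    obtain ⟨h0, hfac⟩ := key' hs mp hmp Bs hclosed u
    refine ⟨h0, ?_⟩
    intro Y g hg
    obtain ⟨h, hh⟩ := hfac g hg
    refine ⟨h, hh.symm, ?_⟩
    intro h' hh'
    have : h' ≫ u = h ≫ u := by rw [hh', hh]
    exact hu.right_cancellation _ _ this
  have hcoker : ∀ {A B : C} (v : A ⟶ B), Epi v → IsCokernelOf v (Bs.prj v) := by
    intro A B v hv
    refine ⟨prj_comp_self' Bs v, ?_⟩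
    intro Xx g hg
    obtain ⟨h0, hfac⟩ := key' hs mp hmp Bs hclosed (s v)
    have hsg : s g ≫ Bs.prj (s (s v)) = 0 := by
      rw [hinv]
      have h6 := congrArg s hg
      have hspv : s (Bs.prj v) = Bs.prj v := (Bs.prj_isProjection v).2
      rw [hcomp, s_zero' hs, hspv] at h6
      exact h6
    obtain ⟨h, hh⟩ := hfac (s g) hsg
    refine ⟨s h, ?_, ?_⟩
    · have h7 := congrArg s hh
      rw [hinv, hcomp, hinv] at h7
      exact h7.symm
    · intro h' hh'
      have : v ≫ h' = v ≫ s h := by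
        rw [hh']
        have h7 := congrArg s hh
        rw [hinv, hcomp, hinv] at h7
        exact h7
      exact hv.left_cancellation _ _ this
  exact ⟨hker, hcoker, fun u hu => ⟨_, _, hker u hu⟩, fun v hv => ⟨_, _, hcoker v hv⟩⟩
end

section
/- An inverse category C is exact if and only if C is a Baer*-category with respect to the canonical involution, every projection of C is closed, and every projection of C can be written as a monomorphism composed with an epimorphism. -/
open CategoryTheory CategoryTheory.Limits

universe v u

variable {C : Type u} [Category.{v} C]

section InvAux
variable {inv : MorphismOp C}
  (hinv : ∀ {A B : C} (f : A ⟶ B),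
    (f ≫ inv f ≫ f = f ∧ inv f ≫ f ≫ inv f = inv f) ∧
    ∀ g : B ⟶ A, f ≫ g ≫ f = f → g ≫ f ≫ g = g → g = inv f)

include hinv

lemma fgf {A B : C} (f : A ⟶ B) : f ≫ inv f ≫ f = f := (hinv f).1.1
lemma gfg {A B : C} (f : A ⟶ B) : inv f ≫ f ≫ inv f = inv f := (hinv f).1.2

lemma iinv_inv {A B : C} (f : A ⟶ B) : inv (inv f) = f :=
  ((hinv (inv f)).2 f (gfg hinv f) (fgf hinv f)).symm

lemma inv_idem {A : C} {e : A ⟶ A} (he : e ≫ e = e) : inv e = e :=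
  ((hinv e).2 e (by rw [he, he]) (by rw [he, he])).symm

lemma comp_idem {A : C} {e f : A ⟶ A} (he : e ≫ e = e) (hf : f ≫ f = f) :
    (e ≫ f) ≫ (e ≫ f) = e ≫ f := by
  set a := e ≫ f with ha
  set x := inv a with hx
  have hx1 : a ≫ x ≫ a = a := fgf hinv a
  have hx2 : x ≫ a ≫ x = x := gfg hinv a
  have hy : f ≫ x ≫ e = x := by
    refine (hinv a).2 _ ?_ ?_
    · calc a ≫ (f ≫ x ≫ e) ≫ a = e ≫ (f ≫ f) ≫ x ≫ (e ≫ e) ≫ f := by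
            simp [ha, Category.assoc]
      _ = a ≫ x ≫ a := by rw [he, hf]; simp [ha, Category.assoc]
      _ = a := hx1
    · calc (f ≫ x ≫ e) ≫ a ≫ (f ≫ x ≫ e)
          = f ≫ x ≫ (e ≫ e) ≫ (f ≫ f) ≫ x ≫ e := by simp [ha, Category.assoc]
        _ = f ≫ (x ≫ a ≫ x) ≫ e := by rw [he, hf]; simp [ha, Category.assoc]
        _ = f ≫ x ≫ e := by rw [hx2]
  have hxx : x ≫ x = x := by
    conv_lhs => rw [← hy]
    calc (f ≫ x ≫ e) ≫ f ≫ x ≫ e = f ≫ (x ≫ a ≫ x) ≫ e := by simp [ha, Category.assoc]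
    _ = f ≫ x ≫ e := by rw [hx2]
    _ = x := hy
  have : a = x := (iinv_inv hinv a).symm.trans (inv_idem hinv hxx)
  rw [this]; exact hxx

lemma idem_comm {A : C} {e f : A ⟶ A} (he : e ≫ e = e) (hf : f ≫ f = f) :
    e ≫ f = f ≫ e := by
  have hef := comp_idem hinv he hf
  have hfe := comp_idem hinv hf he
  have : f ≫ e = inv (e ≫ f) := by
    refine (hinv (e ≫ f)).2 _ ?_ ?_
    · calc (e ≫ f) ≫ (f ≫ e) ≫ e ≫ f = e ≫ (f ≫ f) ≫ (e ≫ e) ≫ f := by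
            simp [Category.assoc]
        _ = (e ≫ f) ≫ e ≫ f := by rw [he, hf]; simp [Category.assoc]
        _ = e ≫ f := hef
    · calc (f ≫ e) ≫ (e ≫ f) ≫ f ≫ e = f ≫ (e ≫ e) ≫ (f ≫ f) ≫ e := by
            simp [Category.assoc]
        _ = (f ≫ e) ≫ f ≫ e := by rw [he, hf]; simp [Category.assoc]
        _ = f ≫ e := hfe
  rw [this, inv_idem hinv hef]

lemma inv_comp {A B D : C} (f : A ⟶ B) (g : B ⟶ D) :
    inv (f ≫ g) = inv g ≫ inv f := by
  have h1 : (f ≫ inv f) ≫ (f ≫ inv f) = f ≫ inv f := by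
    rw [Category.assoc, ← Category.assoc (inv f), ← Category.assoc f, fgf hinv]
  have hgi : (inv g ≫ g) ≫ (inv g ≫ g) = inv g ≫ g := by
    rw [Category.assoc, ← Category.assoc g, ← Category.assoc (inv g), gfg hinv]
  have hfi : (inv f ≫ f) ≫ (inv f ≫ f) = inv f ≫ f := by
    rw [Category.assoc, ← Category.assoc f, ← Category.assoc (inv f), gfg hinv]
  have hgg : (g ≫ inv g) ≫ (g ≫ inv g) = g ≫ inv g := by
    rw [Category.assoc, ← Category.assoc (inv g), ← Category.assoc g, fgf hinv]
  have comm : (inv f ≫ f) ≫ (g ≫ inv g) = (g ≫ inv g) ≫ (inv f ≫ f) :=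
    idem_comm hinv hfi hgg
  refine ((hinv (f ≫ g)).2 _ ?_ ?_).symm
  · calc (f ≫ g) ≫ (inv g ≫ inv f) ≫ f ≫ g
        = f ≫ (g ≫ inv g) ≫ (inv f ≫ f) ≫ g := by simp [Category.assoc]
      _ = f ≫ (inv f ≫ f) ≫ (g ≫ inv g) ≫ g := by
          rw [← Category.assoc (g ≫ inv g), ← comm]; simp [Category.assoc]
      _ = (f ≫ inv f ≫ f) ≫ (g ≫ inv g ≫ g) := by simp [Category.assoc]
      _ = f ≫ g := by rw [fgf hinv, fgf hinv]
  · calc (inv g ≫ inv f) ≫ (f ≫ g) ≫ inv g ≫ inv f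
        = inv g ≫ (inv f ≫ f) ≫ (g ≫ inv g) ≫ inv f := by simp [Category.assoc]
      _ = inv g ≫ (g ≫ inv g) ≫ (inv f ≫ f) ≫ inv f := by
          rw [← Category.assoc (inv f ≫ f), comm]; simp [Category.assoc]
      _ = (inv g ≫ g ≫ inv g) ≫ (inv f ≫ f ≫ inv f) := by simp [Category.assoc]
      _ = inv g ≫ inv f := by rw [gfg hinv, gfg hinv]

lemma iinv_zero [HasZeroObject C] [HasZeroMorphisms C] {A B : C} :
    inv (0 : A ⟶ B) = (0 : B ⟶ A) :=
  ((hinv (0 : A ⟶ B)).2 0 (by simp) (by simp)).symm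

lemma mono_split {K A : C} (u : K ⟶ A) (hu : Mono u) : u ≫ inv u = 𝟙 K := by
  have := fgf hinv u
  rw [← Category.assoc] at this
  exact (cancel_mono u).1 (by rw [this, Category.id_comp])

lemma epi_split {A I : C} (q : A ⟶ I) (hq : Epi q) : inv q ≫ q = 𝟙 I := by
  have := fgf hinv q
  exact (cancel_epi q).1 (by rw [this, Category.comp_id])

lemma gf_idem {A B : C} (f : A ⟶ B) : (inv f ≫ f) ≫ (inv f ≫ f) = inv f ≫ f := by
  calc (inv f ≫ f) ≫ inv f ≫ f = (inv f ≫ f ≫ inv f) ≫ f := by simp [Category.assoc]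
    _ = inv f ≫ f := by rw [gfg hinv]

lemma fg_idem {A B : C} (f : A ⟶ B) : (f ≫ inv f) ≫ (f ≫ inv f) = f ≫ inv f := by
  calc (f ≫ inv f) ≫ f ≫ inv f = (f ≫ inv f ≫ f) ≫ inv f := by simp [Category.assoc]
    _ = f ≫ inv f := by rw [fgf hinv]

omit hinv in
lemma kernel_mono [HasZeroMorphisms C] {K A B : C} {u : K ⟶ A} {f : A ⟶ B}
    (h : IsKernelOf u f) : Mono u := by
  constructor
  intro X a b hab
  have h0 : (a ≫ u) ≫ f = 0 := by rw [Category.assoc, h.1, comp_zero]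
  obtain ⟨t, ht, huniq⟩ := h.2 (a ≫ u) h0
  rw [huniq a rfl, huniq b hab.symm]

omit hinv in
lemma split_of_idem {A I : C} {i : A ⟶ A} {q : A ⟶ I} {p : I ⟶ A}
    (hq : Epi q) (hp : Mono p) (hqp : q ≫ p = i) (hi : i ≫ i = i) : p ≫ q = 𝟙 I := by
  have key : q ≫ (p ≫ q) ≫ p = q ≫ 𝟙 I ≫ p := by
    rw [Category.id_comp]
    calc q ≫ (p ≫ q) ≫ p = (q ≫ p) ≫ (q ≫ p) := by simp [Category.assoc]
      _ = q ≫ p := by rw [hqp, hi, ← hqp]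
  exact (cancel_mono p).1 ((cancel_epi q).1 key)

lemma closed_aux [HasZeroObject C] [HasZeroMorphisms C]
    (hE : IsExactCategory C) {A : C} {i : A ⟶ A} (hi : i ≫ i = i)
    {K : C} {u : K ⟶ A} (hu : IsKernelOf u i)
    {W : C} {w : W ⟶ A} (hw : IsKernelOf w (inv u ≫ u)) :
    inv w ≫ w = i := by
  have hum : Mono u := kernel_mono hu
  obtain ⟨I, q, p, hq, hp, hqp⟩ := hE.monoEpiFact i
  have hpq : p ≫ q = 𝟙 I := split_of_idem hq hp hqp hi
  have hii : inv i = i := inv_idem hinv hi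
  have hpi : p ≫ inv p = 𝟙 I := mono_split hinv p hp
  have hpeq : p = inv q := by
    calc p = p ≫ i := by rw [← hqp, ← Category.assoc, hpq, Category.id_comp]
      _ = p ≫ inv p ≫ inv q := by rw [← hii, ← hqp, inv_comp hinv]
      _ = inv q := by rw [← Category.assoc, hpi, Category.id_comp]
  obtain ⟨Y, f₀, hc⟩ := hE.conormal q hq
  have hf₀i : f₀ ≫ i = 0 := by rw [← hqp, ← Category.assoc, hc.1, zero_comp]
  obtain ⟨h₀, hh₀, _⟩ := hu.2 f₀ hf₀i
  have hw1 : w ≫ inv u = 0 := by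
    apply (cancel_mono u).1
    rw [Category.assoc, hw.1, zero_comp]
  have hw2 : u ≫ inv w = 0 := by
    calc u ≫ inv w = inv (inv u) ≫ inv w := by rw [iinv_inv hinv]
      _ = inv (w ≫ inv u) := (inv_comp hinv _ _).symm
      _ = 0 := by rw [hw1, iinv_zero hinv]
  have hf₀w : f₀ ≫ inv w = 0 := by rw [← hh₀, Category.assoc, hw2, comp_zero]
  obtain ⟨t, ht, _⟩ := hc.2 (inv w) hf₀w
  have hwt : w = inv t ≫ inv q := by
    rw [← iinv_inv hinv w, ← ht, inv_comp hinv]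
  have hqsplit : inv q ≫ q = 𝟙 I := epi_split hinv q hq
  have hwi : w ≫ i = w := by
    rw [← hpeq] at hwt
    calc w ≫ i = (inv t ≫ p) ≫ q ≫ p := by rw [← hwt, ← hqp]
      _ = inv t ≫ (p ≫ q) ≫ p := by simp [Category.assoc]
      _ = inv t ≫ p := by rw [hpq, Category.id_comp]
      _ = w := hwt.symm
  have he' : (inv u ≫ u) ≫ (inv u ≫ u) = inv u ≫ u := gf_idem hinv u
  have hii' : i ≫ (inv u ≫ u) = 0 := by
    rw [idem_comm hinv hi he', Category.assoc, hu.1, comp_zero]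
  obtain ⟨h₁, hh₁, _⟩ := hw.2 i hii'
  have hiw : i ≫ inv w ≫ w = i := by
    calc i ≫ inv w ≫ w = (h₁ ≫ w) ≫ inv w ≫ w := by rw [hh₁]
      _ = h₁ ≫ (w ≫ inv w ≫ w) := by simp [Category.assoc]
      _ = h₁ ≫ w := by rw [fgf hinv]
      _ = i := hh₁
  have hwidem : (inv w ≫ w) ≫ (inv w ≫ w) = inv w ≫ w := gf_idem hinv w
  calc inv w ≫ w = (inv w ≫ w) ≫ i := by rw [Category.assoc, hwi]
    _ = i ≫ (inv w ≫ w) := idem_comm hinv hwidem hi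
    _ = i := by rw [← Category.assoc] at hiw ⊢; exact hiw

end InvAux

/-- An inverse category is exact iff it is a Baer*-category with respect
to the canonical involution, every projection is closed, and every projection factors as a
monomorphism composed with an epimorphism. -/
theorem stmt5 [HasZeroObject C] [HasZeroMorphisms C] (inv : MorphismOp C)
    (hinv : IsInverseOp inv) :
    IsExactCategory C ↔
      ∃ Bs : BaerStar C inv,
        (∀ {A : C} (i : A ⟶ A), IsProjection inv i → Bs.prj (Bs.prj i) = i) ∧
        (∀ {A : C} (i : A ⟶ A), IsProjection inv i →
          ∃ (I : C) (q : A ⟶ I) (p : I ⟶ A), Epi q ∧ Mono p ∧ q ≫ p = i) := by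
  constructor
  · -- Forward: exact ⇒ Baer* with closed projections and factorizations
    intro hE
    refine ⟨⟨fun {A B} f =>
        inv ((hE.hasKernels f).choose_spec.choose) ≫ (hE.hasKernels f).choose_spec.choose,
        fun {A B} f => ?_, fun {A B X} f g => ?_⟩, fun {A} i hiP => ?_,
        fun {A} i _ => hE.monoEpiFact i⟩
    · exact ⟨gf_idem hinv _, inv_idem hinv (gf_idem hinv _)⟩
    · set u := (hE.hasKernels f).choose_spec.choose with hu_def
      have hu : IsKernelOf u f := (hE.hasKernels f).choose_spec.choose_spec
      constructor
      · intro hg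
        obtain ⟨h, hh, -⟩ := hu.2 g hg
        refine ⟨g, ?_⟩
        calc g = h ≫ u := hh.symm
          _ = h ≫ (u ≫ inv u ≫ u) := by rw [fgf hinv]
          _ = (h ≫ u) ≫ inv u ≫ u := by simp [Category.assoc]
          _ = g ≫ inv u ≫ u := by rw [hh]
      · rintro ⟨h, rfl⟩
        calc (h ≫ inv u ≫ u) ≫ f = h ≫ inv u ≫ (u ≫ f) := by simp [Category.assoc]
          _ = 0 := by rw [hu.1, comp_zero, comp_zero]
    · exact closed_aux hinv hE hiP.1 (hE.hasKernels i).choose_spec.choose_spec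
        (hE.hasKernels _).choose_spec.choose_spec
  · -- Backward: Baer* with closed projections and factorizations ⇒ exact
    rintro ⟨Bs, hclosed, hfact⟩
    have prjz : ∀ {A B : C} (f : A ⟶ B), Bs.prj f ≫ f = 0 := fun f =>
      (Bs.prj_spec f (Bs.prj f)).2 ⟨𝟙 _, (Category.id_comp _).symm⟩
    have pstar : ∀ {A B : C} (f : A ⟶ B), inv (Bs.prj f) = Bs.prj f := fun f =>
      (Bs.prj_isProjection f).2
    refine ⟨?_, ?_, ?_, ?_, ?_⟩
    · -- kernels
      intro A B f
      obtain ⟨I, q, p, hq, hp, hqp⟩ := hfact (Bs.prj f) (Bs.prj_isProjection f)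
      have hpq := split_of_idem hq hp hqp (Bs.prj_isProjection f).1
      refine ⟨I, p, ?_, ?_⟩
      · refine (Bs.prj_spec f p).2 ⟨p, ?_⟩
        rw [← hqp, ← Category.assoc, hpq, Category.id_comp]
      · intro X g hg
        obtain ⟨h, hh⟩ := (Bs.prj_spec f g).1 hg
        refine ⟨h ≫ q, ?_, ?_⟩
        · show (h ≫ q) ≫ p = g
          rw [Category.assoc, hqp, ← hh]
        · intro y hy
          replace hy : y ≫ p = g := hy
          apply (cancel_mono p).1
          rw [hy, Category.assoc, hqp, ← hh]
    · -- cokernels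
      intro A B f
      obtain ⟨I, q, p, hq, hp, hqp⟩ := hfact (Bs.prj (inv f)) (Bs.prj_isProjection (inv f))
      have hpq := split_of_idem hq hp hqp (Bs.prj_isProjection (inv f)).1
      have hjq : Bs.prj (inv f) ≫ q = q := by
        rw [← hqp, Category.assoc, hpq, Category.comp_id]
      have hfj : f ≫ Bs.prj (inv f) = 0 := by
        calc f ≫ Bs.prj (inv f) = inv (inv (f ≫ Bs.prj (inv f))) := (iinv_inv hinv _).symm
          _ = inv (inv (Bs.prj (inv f)) ≫ inv f) := by rw [inv_comp hinv]
          _ = inv (Bs.prj (inv f) ≫ inv f) := by rw [pstar]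
          _ = 0 := by rw [prjz (inv f), iinv_zero hinv]
      refine ⟨I, q, ?_, ?_⟩
      · rw [← hjq, ← Category.assoc, hfj, zero_comp]
      · intro X g hg
        have h1 : inv g ≫ inv f = 0 := by rw [← inv_comp hinv, hg, iinv_zero hinv]
        obtain ⟨h, hh⟩ := (Bs.prj_spec (inv f) (inv g)).1 h1
        have hg2 : g = Bs.prj (inv f) ≫ inv h := by
          calc g = inv (inv g) := (iinv_inv hinv g).symm
            _ = inv (h ≫ Bs.prj (inv f)) := by rw [← hh]
            _ = inv (Bs.prj (inv f)) ≫ inv h := inv_comp hinv _ _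
            _ = Bs.prj (inv f) ≫ inv h := by rw [pstar]
        refine ⟨p ≫ inv h, ?_, ?_⟩
        · show q ≫ p ≫ inv h = g
          rw [← Category.assoc, hqp, ← hg2]
        · intro y hy
          replace hy : q ≫ y = g := hy
          apply (cancel_epi q).1
          rw [hy, ← Category.assoc, hqp, ← hg2]
    · -- normal
      intro X A u hu
      have hee : (inv u ≫ u) ≫ (inv u ≫ u) = inv u ≫ u := gf_idem hinv u
      have heproj : IsProjection inv (inv u ≫ u) := ⟨hee, inv_idem hinv hee⟩
      refine ⟨A, Bs.prj (inv u ≫ u), ?_, ?_⟩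
      · have h2 : (inv u ≫ u) ≫ Bs.prj (inv u ≫ u) = 0 := by
          rw [idem_comm hinv hee (Bs.prj_isProjection _).1, prjz]
        calc u ≫ Bs.prj (inv u ≫ u)
            = (u ≫ inv u ≫ u) ≫ Bs.prj (inv u ≫ u) := by rw [fgf hinv]
          _ = u ≫ (inv u ≫ u) ≫ Bs.prj (inv u ≫ u) := by simp [Category.assoc]
          _ = 0 := by rw [h2, comp_zero]
      · intro Y g hg
        obtain ⟨h, hh⟩ := (Bs.prj_spec (Bs.prj (inv u ≫ u)) g).1 hg
        rw [hclosed _ heproj] at hh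
        refine ⟨h ≫ inv u, ?_, ?_⟩
        · show (h ≫ inv u) ≫ u = g
          rw [Category.assoc, ← hh]
        · intro y hy
          replace hy : y ≫ u = g := hy
          apply (cancel_mono u).1
          rw [hy, Category.assoc, ← hh]
    · -- conormal
      intro A B v hv
      have hsplit : inv v ≫ v = 𝟙 B := epi_split hinv v hv
      have hee : (v ≫ inv v) ≫ (v ≫ inv v) = v ≫ inv v := fg_idem hinv v
      have heproj : IsProjection inv (v ≫ inv v) := ⟨hee, inv_idem hinv hee⟩
      refine ⟨A, Bs.prj (v ≫ inv v), ?_, ?_⟩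
      · have hev : (v ≫ inv v) ≫ v = v := by rw [Category.assoc, hsplit, Category.comp_id]
        calc Bs.prj (v ≫ inv v) ≫ v
            = (Bs.prj (v ≫ inv v) ≫ (v ≫ inv v)) ≫ v := by rw [Category.assoc, hev]
          _ = 0 := by rw [prjz, zero_comp]
      · intro Y g hg
        have h1 : inv g ≫ Bs.prj (v ≫ inv v) = 0 := by
          calc inv g ≫ Bs.prj (v ≫ inv v)
              = inv g ≫ inv (Bs.prj (v ≫ inv v)) := by rw [pstar]
            _ = inv (Bs.prj (v ≫ inv v) ≫ g) := (inv_comp hinv _ _).symm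
            _ = 0 := by rw [hg, iinv_zero hinv]
        obtain ⟨h, hh⟩ := (Bs.prj_spec (Bs.prj (v ≫ inv v)) (inv g)).1 h1
        rw [hclosed _ heproj] at hh
        have hg2 : g = v ≫ inv v ≫ inv h := by
          calc g = inv (inv g) := (iinv_inv hinv g).symm
            _ = inv (h ≫ v ≫ inv v) := by rw [← hh]
            _ = inv (v ≫ inv v) ≫ inv h := inv_comp hinv _ _
            _ = (v ≫ inv v) ≫ inv h := by rw [inv_idem hinv hee]
            _ = v ≫ inv v ≫ inv h := Category.assoc _ _ _
        refine ⟨inv v ≫ inv h, hg2.symm, ?_⟩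
        intro y hy
        replace hy : v ≫ y = g := hy
        apply (cancel_epi v).1
        rw [hy]; exact hg2
    · -- mono-epi factorization
      intro A B f
      have hee : (inv f ≫ f) ≫ (inv f ≫ f) = inv f ≫ f := gf_idem hinv f
      have heproj : IsProjection inv (inv f ≫ f) := ⟨hee, inv_idem hinv hee⟩
      obtain ⟨I, q, p, hq, hp, hqp⟩ := hfact (inv f ≫ f) heproj
      have hpq := split_of_idem hq hp hqp hee
      have heq : (inv f ≫ f) ≫ q = q := by rw [← hqp, Category.assoc, hpq, Category.comp_id]
      refine ⟨I, f ≫ q, p, ?_, hp, ?_⟩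
      · constructor
        intro Z a b hab
        apply (cancel_epi q).1
        calc q ≫ a = ((inv f ≫ f) ≫ q) ≫ a := by rw [heq]
          _ = inv f ≫ ((f ≫ q) ≫ a) := by simp [Category.assoc]
          _ = inv f ≫ ((f ≫ q) ≫ b) := by rw [hab]
          _ = ((inv f ≫ f) ≫ q) ≫ b := by simp [Category.assoc]
          _ = q ≫ b := by rw [heq]
      · rw [Category.assoc, hqp]
        exact fgf hinv f
end

section
/- Let C be an exact inverse category, u : X → A a monomorphism, f : A → B a morphism, and suppose P(f)(u ∘ u*) = p ∘ p* where p : I → B is a monomorphism. Then p is the image of f ∘ u: the morphism f ∘ u factors through p, and for every factorization f ∘ u = s ∘ t with s a monomorphism, the monomorphism p factors through s; i.e. (I, p) is the smallest subobject of B through which f ∘ u factors. -/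
open CategoryTheory CategoryTheory.Limits

universe v u

variable {C : Type u} [Category.{v} C]

/-- In an inverse category, an idempotent is its own generalized inverse. -/
lemma inv_of_idem {inv : MorphismOp C} (hinv : IsInverseOp inv) {A : C} (e : A ⟶ A)
    (he : e ≫ e = e) : inv e = e :=
  ((hinv e).2 e (by rw [he, he]) (by rw [he, he])).symm

/-- In an inverse category, the composite of two idempotent endomorphisms is
idempotent. -/
lemma idem_comp {inv : MorphismOp C} (hinv : IsInverseOp inv) {A : C} (e g : A ⟶ A)
    (he : e ≫ e = e) (hg : g ≫ g = g) : (e ≫ g) ≫ (e ≫ g) = e ≫ g := by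
  set x := inv (e ≫ g) with hx
  have h1 : (e ≫ g) ≫ x ≫ (e ≫ g) = e ≫ g := (hinv (e ≫ g)).1.1
  have h2 : x ≫ (e ≫ g) ≫ x = x := (hinv (e ≫ g)).1.2
  -- g ≫ x ≫ e is an idempotent generalized inverse of e ≫ g, hence equals x
  have hginv : g ≫ x ≫ e = x := by
    refine (hinv (e ≫ g)).2 _ ?_ ?_
    · calc (e ≫ g) ≫ (g ≫ x ≫ e) ≫ e ≫ g
          = e ≫ (g ≫ g) ≫ x ≫ (e ≫ e) ≫ g := by simp only [Category.assoc]
        _ = (e ≫ g) ≫ x ≫ (e ≫ g) := by rw [hg, he]; simp only [Category.assoc]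
        _ = e ≫ g := h1
    · calc (g ≫ x ≫ e) ≫ (e ≫ g) ≫ g ≫ x ≫ e
          = g ≫ x ≫ (e ≫ e) ≫ (g ≫ g) ≫ x ≫ e := by simp only [Category.assoc]
        _ = g ≫ (x ≫ (e ≫ g) ≫ x) ≫ e := by rw [he, hg]; simp only [Category.assoc]
        _ = g ≫ x ≫ e := by rw [h2]
  have hxidem : x ≫ x = x := by
    conv_lhs => rw [← hginv]
    calc (g ≫ x ≫ e) ≫ g ≫ x ≫ e
        = g ≫ (x ≫ (e ≫ g) ≫ x) ≫ e := by simp only [Category.assoc]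
      _ = g ≫ x ≫ e := by rw [h2]
      _ = x := hginv
  -- then e ≫ g is a generalized inverse of x, as is x itself, so e ≫ g = x
  have h3 : e ≫ g = inv x := (hinv x).2 _ h2 h1
  have h4 : inv x = x := inv_of_idem hinv x hxidem
  rw [h3, h4]; exact hxidem

/-- In an inverse category, idempotent endomorphisms commute. -/
lemma idem_comm_s7 {inv : MorphismOp C} (hinv : IsInverseOp inv) {A : C} (e g : A ⟶ A)
    (he : e ≫ e = e) (hg : g ≫ g = g) : e ≫ g = g ≫ e := by
  have heg := idem_comp hinv e g he hg
  have hge := idem_comp hinv g e hg he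
  have h1 : g ≫ e = inv (e ≫ g) := by
    refine (hinv (e ≫ g)).2 _ ?_ ?_
    · calc (e ≫ g) ≫ (g ≫ e) ≫ e ≫ g
          = e ≫ (g ≫ g) ≫ (e ≫ e) ≫ g := by simp only [Category.assoc]
        _ = (e ≫ g) ≫ e ≫ g := by rw [hg, he]; simp only [Category.assoc]
        _ = e ≫ g := heg
    · calc (g ≫ e) ≫ (e ≫ g) ≫ g ≫ e
          = g ≫ (e ≫ e) ≫ (g ≫ g) ≫ e := by simp only [Category.assoc]
        _ = (g ≫ e) ≫ g ≫ e := by rw [he, hg]; simp only [Category.assoc]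
        _ = g ≫ e := hge
  rw [h1, inv_of_idem hinv _ heg]

/-- In an exact inverse category, if `u : X ⟶ A` is mono, `f : A ⟶ B`,
and `P(f)(u ∘ u*) = p ∘ p*` with `p : I ⟶ B` mono, then `p` is the image of `f ∘ u`:
`f ∘ u` factors through `p`, and `p` factors through every mono that `f ∘ u` factors
through. -/
theorem stmt7 [HasZeroObject C] [HasZeroMorphisms C] (inv : MorphismOp C)
    (hinv : IsInverseOp inv) (hC : IsExactCategory C)
    {X A B I : C} (u : X ⟶ A) (hu : Mono u) (f : A ⟶ B) (p : I ⟶ B) (hp : Mono p)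
    (hP : inv f ≫ (inv u ≫ u) ≫ f = inv p ≫ p) :
    (∃ t : X ⟶ I, t ≫ p = u ≫ f) ∧
      ∀ {S : C} (t : X ⟶ S) (m : S ⟶ B), Mono m → t ≫ m = u ≫ f →
        ∃ w : I ⟶ S, w ≫ m = p := by
  have hf : f ≫ inv f ≫ f = f := (hinv f).1.1
  have hu' : u ≫ inv u ≫ u = u := (hinv u).1.1
  have hp' : p ≫ inv p ≫ p = p := (hinv p).1.1
  -- the two idempotents on A
  have hE : (f ≫ inv f) ≫ (f ≫ inv f) = f ≫ inv f := by
    rw [← Category.assoc, Category.assoc f, hf]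
  have hF : (inv u ≫ u) ≫ (inv u ≫ u) = inv u ≫ u := by
    rw [← Category.assoc, Category.assoc (inv u), (hinv u).1.2]
  constructor
  · refine ⟨u ≫ f ≫ inv p, ?_⟩
    calc (u ≫ f ≫ inv p) ≫ p = u ≫ f ≫ inv p ≫ p := by simp only [Category.assoc]
      _ = u ≫ f ≫ inv f ≫ (inv u ≫ u) ≫ f := by rw [← hP]
      _ = u ≫ ((f ≫ inv f) ≫ (inv u ≫ u)) ≫ f := by simp only [Category.assoc]
      _ = u ≫ ((inv u ≫ u) ≫ (f ≫ inv f)) ≫ f := by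
          rw [idem_comm_s7 hinv _ _ hE hF]
      _ = (u ≫ inv u ≫ u) ≫ (f ≫ inv f ≫ f) := by simp only [Category.assoc]
      _ = u ≫ f := by rw [hu', hf]
  · intro S t m _ htm
    refine ⟨p ≫ inv m, ?_⟩
    have hm : m ≫ inv m ≫ m = m := (hinv m).1.1
    calc (p ≫ inv m) ≫ m = (p ≫ inv p ≫ p) ≫ inv m ≫ m := by
          rw [hp']; simp only [Category.assoc]
      _ = p ≫ inv f ≫ inv u ≫ (u ≫ f) ≫ inv m ≫ m := by
          rw [← hP]; simp only [Category.assoc]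
      _ = p ≫ inv f ≫ inv u ≫ t ≫ m ≫ inv m ≫ m := by
          rw [← htm]; simp only [Category.assoc]
      _ = p ≫ inv f ≫ inv u ≫ t ≫ m := by rw [hm]
      _ = p ≫ inv f ≫ inv u ≫ u ≫ f := by rw [htm]
      _ = p ≫ inv p ≫ p := by rw [← hP]; simp only [Category.assoc]
      _ = p := hp'
end

section
/- Let C be an exact inverse category and f : A → B a morphism of C. If f is a monomorphism then the image function P(f) : P(A) → P(B) is injective, and if f is an epimorphism then P(f) is surjective. -/
open CategoryTheory CategoryTheory.Limits

universe v u

variable {C : Type u} [Category.{v} C]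

/-- In an exact inverse category, if `f` is a monomorphism then the
image function `P(f) : P(A) → P(B)`, `i ↦ f ∘ i ∘ f*`, is injective, and if `f` is an
epimorphism then `P(f)` is surjective. -/
theorem stmt8 [HasZeroObject C] [HasZeroMorphisms C] (inv : MorphismOp C)
    (hinv : IsInverseOp inv) (hC : IsExactCategory C) {A B : C} (f : A ⟶ B) :
    (Mono f → ∀ i j : A ⟶ A, IsProjection inv i → IsProjection inv j →
      inv f ≫ i ≫ f = inv f ≫ j ≫ f → i = j) ∧
    (Epi f → ∀ j : B ⟶ B, IsProjection inv j →
      ∃ i : A ⟶ A, IsProjection inv i ∧ inv f ≫ i ≫ f = j) := by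
  obtain ⟨⟨hf1, hf2⟩, huniq⟩ := hinv f
  constructor
  · intro hm i j _ _ h
    -- f ≫ inv f = 𝟙 A
    have key : f ≫ inv f = 𝟙 A := by
      apply (cancel_mono f).mp
      simpa using hf1
    calc i = (f ≫ inv f) ≫ i ≫ (f ≫ inv f) := by simp [key]
      _ = f ≫ (inv f ≫ i ≫ f) ≫ inv f := by simp only [Category.assoc]
      _ = f ≫ (inv f ≫ j ≫ f) ≫ inv f := by rw [h]
      _ = (f ≫ inv f) ≫ j ≫ (f ≫ inv f) := by simp only [Category.assoc]
      _ = j := by simp [key]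
  · intro he j ⟨hj1, hj2⟩
    have key : inv f ≫ f = 𝟙 B := by
      apply (cancel_epi f).mp
      simpa using hf1
    refine ⟨f ≫ j ≫ inv f, ⟨?_, ?_⟩, ?_⟩
    · calc (f ≫ j ≫ inv f) ≫ f ≫ j ≫ inv f
          = f ≫ j ≫ (inv f ≫ f) ≫ j ≫ inv f := by simp only [Category.assoc]
        _ = f ≫ (j ≫ j) ≫ inv f := by rw [key]; simp
        _ = f ≫ j ≫ inv f := by rw [hj1]
    · -- inv of an idempotent i with i ≫ i = i is i itself, by uniqueness
      have hii : (f ≫ j ≫ inv f) ≫ f ≫ j ≫ inv f = f ≫ j ≫ inv f := by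
        calc (f ≫ j ≫ inv f) ≫ f ≫ j ≫ inv f
            = f ≫ j ≫ (inv f ≫ f) ≫ j ≫ inv f := by simp only [Category.assoc]
          _ = f ≫ (j ≫ j) ≫ inv f := by rw [key]; simp
          _ = f ≫ j ≫ inv f := by rw [hj1]
      obtain ⟨_, huniq'⟩ := hinv (f ≫ j ≫ inv f)
      exact (huniq' (f ≫ j ≫ inv f) (by rw [hii, hii]) (by rw [hii, hii])).symm
    · calc inv f ≫ (f ≫ j ≫ inv f) ≫ f
          = (inv f ≫ f) ≫ j ≫ (inv f ≫ f) := by simp only [Category.assoc]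
        _ = j := by simp [key]
end

section
/- Let C be an exact inverse category, f : A → B a morphism, v : Y → B a monomorphism, and suppose P′(f)(v ∘ v*) = p ∘ p* where p : X → A is a monomorphism. Then the commutative square with horizontal arrows v* ∘ f ∘ p : X → Y (top) and f : A → B (bottom) and vertical arrows p : X → A (left) and v : Y → B (right) is a pullback square. -/
open CategoryTheory CategoryTheory.Limits

universe v u

variable {C : Type u} [Category.{v} C]

section InverseLemmas

lemma my_inv_inv (inv : MorphismOp C) (hinv : IsInverseOp inv) {A B : C} (f : A ⟶ B) :
    inv (inv f) = f :=
  ((hinv (inv f)).2 f (hinv f).1.2 (hinv f).1.1).symm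

lemma my_inv_zero [HasZeroMorphisms C] (inv : MorphismOp C) (hinv : IsInverseOp inv)
    (A B : C) : inv (0 : A ⟶ B) = 0 :=
  ((hinv (0 : A ⟶ B)).2 0 (by simp) (by simp)).symm

lemma my_idem_mul_aux (inv : MorphismOp C) (hinv : IsInverseOp inv) {A : C}
    {e j h : A ⟶ A} (he : e ≫ e = e) (hj : j ≫ j = j)
    (h1 : (e ≫ j) ≫ h ≫ (e ≫ j) = e ≫ j) (h2 : h ≫ (e ≫ j) ≫ h = h)
    (huniq : ∀ g : A ⟶ A, (e ≫ j) ≫ g ≫ (e ≫ j) = e ≫ j → g ≫ (e ≫ j) ≫ g = g → g = h) :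
    (e ≫ j) ≫ (e ≫ j) = e ≫ j ∧ e ≫ j = h := by
  have hk : j ≫ h ≫ e = h := by
    apply huniq
    · calc (e ≫ j) ≫ (j ≫ h ≫ e) ≫ (e ≫ j)
          = e ≫ (j ≫ j) ≫ h ≫ (e ≫ e) ≫ j := by
            simp only [Category.assoc]
        _ = (e ≫ j) ≫ h ≫ (e ≫ j) := by
            rw [he, hj]; simp only [Category.assoc]
        _ = e ≫ j := h1
    · calc (j ≫ h ≫ e) ≫ (e ≫ j) ≫ (j ≫ h ≫ e)
          = j ≫ h ≫ (e ≫ e) ≫ (j ≫ j) ≫ h ≫ e := by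
            simp only [Category.assoc]
        _ = j ≫ (h ≫ (e ≫ j) ≫ h) ≫ e := by
            rw [he, hj]; simp only [Category.assoc]
        _ = j ≫ h ≫ e := by rw [h2]
  have hidem : h ≫ h = h := by
    conv_lhs => rw [← hk]
    calc (j ≫ h ≫ e) ≫ (j ≫ h ≫ e)
        = j ≫ (h ≫ (e ≫ j) ≫ h) ≫ e := by simp only [Category.assoc]
      _ = j ≫ h ≫ e := by rw [h2]
      _ = h := hk
  have hself : h = inv h := by
    apply (hinv h).2 <;> rw [hidem, hidem]
  have hej : e ≫ j = h := by
    have h3 : e ≫ j = inv h := by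
      apply (hinv h).2
      · exact h2
      · exact h1
    rw [h3, ← hself]
  exact ⟨by rw [hej, hidem], hej⟩

lemma my_idem_mul (inv : MorphismOp C) (hinv : IsInverseOp inv) {A : C} {e j : A ⟶ A}
    (he : e ≫ e = e) (hj : j ≫ j = j) :
    (e ≫ j) ≫ (e ≫ j) = e ≫ j ∧ e ≫ j = inv (e ≫ j) := by
  obtain ⟨⟨h1, h2⟩, huniq⟩ := hinv (e ≫ j)
  exact my_idem_mul_aux inv hinv he hj h1 h2 huniq

lemma my_idem_comm (inv : MorphismOp C) (hinv : IsInverseOp inv) {A : C} {e j : A ⟶ A}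
    (he : e ≫ e = e) (hj : j ≫ j = j) :
    e ≫ j = j ≫ e := by
  obtain ⟨hej, hejs⟩ := my_idem_mul inv hinv he hj
  obtain ⟨hje, -⟩ := my_idem_mul inv hinv hj he
  have h3 : j ≫ e = inv (e ≫ j) := by
    apply (hinv (e ≫ j)).2
    · calc (e ≫ j) ≫ (j ≫ e) ≫ (e ≫ j)
          = e ≫ (j ≫ j) ≫ (e ≫ e) ≫ j := by simp only [Category.assoc]
        _ = (e ≫ j) ≫ (e ≫ j) := by rw [he, hj]; simp only [Category.assoc]
        _ = e ≫ j := hej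
    · calc (j ≫ e) ≫ (e ≫ j) ≫ (j ≫ e)
          = j ≫ (e ≫ e) ≫ (j ≫ j) ≫ e := by simp only [Category.assoc]
        _ = (j ≫ e) ≫ (j ≫ e) := by rw [he, hj]; simp only [Category.assoc]
        _ = j ≫ e := hje
  rw [h3, ← hejs]

lemma my_inv_comp (inv : MorphismOp C) (hinv : IsInverseOp inv) {A B D : C}
    (f : A ⟶ B) (g : B ⟶ D) :
    inv (f ≫ g) = inv g ≫ inv f := by
  have he : (g ≫ inv g) ≫ (g ≫ inv g) = g ≫ inv g := by
    calc (g ≫ inv g) ≫ (g ≫ inv g) = g ≫ (inv g ≫ g ≫ inv g) := by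
          simp only [Category.assoc]
      _ = g ≫ inv g := by rw [(hinv g).1.2]
  have hj : (inv f ≫ f) ≫ (inv f ≫ f) = inv f ≫ f := by
    calc (inv f ≫ f) ≫ (inv f ≫ f) = inv f ≫ (f ≫ inv f ≫ f) := by
          simp only [Category.assoc]
      _ = inv f ≫ f := by rw [(hinv f).1.1]
  have hcomm := my_idem_comm inv hinv he hj
  symm
  apply (hinv (f ≫ g)).2
  · calc (f ≫ g) ≫ (inv g ≫ inv f) ≫ (f ≫ g)
        = f ≫ (g ≫ inv g) ≫ (inv f ≫ f) ≫ g := by simp only [Category.assoc]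
      _ = f ≫ ((g ≫ inv g) ≫ (inv f ≫ f)) ≫ g := by simp only [Category.assoc]
      _ = f ≫ ((inv f ≫ f) ≫ (g ≫ inv g)) ≫ g := by rw [hcomm]
      _ = (f ≫ inv f ≫ f) ≫ (g ≫ inv g ≫ g) := by simp only [Category.assoc]
      _ = f ≫ g := by rw [(hinv f).1.1]; congr 1; rw [(hinv g).1.1]
  · calc (inv g ≫ inv f) ≫ (f ≫ g) ≫ (inv g ≫ inv f)
        = inv g ≫ ((inv f ≫ f) ≫ (g ≫ inv g)) ≫ inv f := by simp only [Category.assoc]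
      _ = inv g ≫ ((g ≫ inv g) ≫ (inv f ≫ f)) ≫ inv f := by rw [← hcomm]
      _ = (inv g ≫ g ≫ inv g) ≫ (inv f ≫ f ≫ inv f) := by simp only [Category.assoc]
      _ = inv g ≫ inv f := by rw [(hinv g).1.2]; congr 1; rw [(hinv f).1.2]

lemma my_mono_retract (inv : MorphismOp C) (hinv : IsInverseOp inv) {A B : C}
    (f : A ⟶ B) (hf : Mono f) : f ≫ inv f = 𝟙 A := by
  rw [← cancel_mono f, Category.assoc, (hinv f).1.1, Category.id_comp]

end InverseLemmas

/-- In an exact inverse category (a Baer*-category for the canonical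
involution), if `v : Y ⟶ B` is mono, `f : A ⟶ B`, and `P′(f)(v ∘ v*) = p ∘ p*` with
`p : X ⟶ A` mono, then the square with top `v* ∘ f ∘ p`, left `p`, right `v`, bottom `f`
is a pullback square. -/
theorem stmt12 [HasZeroObject C] [HasZeroMorphisms C] (inv : MorphismOp C)
    (hinv : IsInverseOp inv) (hC : IsExactCategory C) (Bs : BaerStar C inv)
    {X Y A B : C} (f : A ⟶ B) (v : Y ⟶ B) (hv : Mono v) (p : X ⟶ A) (hp : Mono p)
    (hP : Bs.prj (f ≫ Bs.prj (inv v ≫ v)) = inv p ≫ p) :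
    IsPullback (p ≫ f ≫ inv v) p v f := by
  have hvretr : v ≫ inv v = 𝟙 Y := my_mono_retract inv hinv v hv
  have hE := Bs.prj_isProjection (inv v ≫ v)
  have hEt : Bs.prj (inv v ≫ v) ≫ (inv v ≫ v) = 0 :=
    (Bs.prj_spec (inv v ≫ v) (Bs.prj (inv v ≫ v))).mpr ⟨Bs.prj (inv v ≫ v), hE.1.symm⟩
  have hEv : Bs.prj (inv v ≫ v) ≫ inv v = 0 := by
    rw [← cancel_mono v, Category.assoc, zero_comp]
    exact hEt
  have hvE : v ≫ Bs.prj (inv v ≫ v) = 0 := by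
    have h1 := congrArg (fun x : B ⟶ Y => inv x) hEv
    replace h1 : inv (Bs.prj (inv v ≫ v) ≫ inv v) = inv (0 : B ⟶ Y) := h1
    rwa [my_inv_comp inv hinv, my_inv_inv inv hinv,
      show inv (Bs.prj (inv v ≫ v)) = Bs.prj (inv v ≫ v) from hE.2,
      my_inv_zero inv hinv] at h1
  have hq_idem : (inv p ≫ p) ≫ (inv p ≫ p) = inv p ≫ p := by
    calc (inv p ≫ p) ≫ (inv p ≫ p) = inv p ≫ (p ≫ inv p ≫ p) := by
          simp only [Category.assoc]
      _ = inv p ≫ p := by rw [(hinv p).1.1]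
  have hqfE : (inv p ≫ p) ≫ (f ≫ Bs.prj (inv v ≫ v)) = 0 :=
    (Bs.prj_spec _ _).mpr ⟨inv p ≫ p, by rw [hP, hq_idem]⟩
  have hpfE : p ≫ f ≫ Bs.prj (inv v ≫ v) = 0 := by
    have h2 : p ≫ (inv p ≫ p) ≫ (f ≫ Bs.prj (inv v ≫ v)) = p ≫ f ≫ Bs.prj (inv v ≫ v) := by
      calc p ≫ (inv p ≫ p) ≫ (f ≫ Bs.prj (inv v ≫ v))
          = (p ≫ inv p ≫ p) ≫ (f ≫ Bs.prj (inv v ≫ v)) := by simp only [Category.assoc]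
        _ = p ≫ f ≫ Bs.prj (inv v ≫ v) := by rw [(hinv p).1.1]
    rw [← h2, hqfE, comp_zero]
  obtain ⟨D, g, hvg, hker⟩ := hC.normal v hv
  have hr_idem : (g ≫ inv g) ≫ (g ≫ inv g) = g ≫ inv g := by
    calc (g ≫ inv g) ≫ (g ≫ inv g) = g ≫ (inv g ≫ g ≫ inv g) := by
          simp only [Category.assoc]
      _ = g ≫ inv g := by rw [(hinv g).1.2]
  have hrt : (g ≫ inv g) ≫ (inv v ≫ v) = 0 := by
    have h0 : inv g ≫ inv v = 0 := by
      rw [← my_inv_comp inv hinv, hvg, my_inv_zero inv hinv]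
    calc (g ≫ inv g) ≫ (inv v ≫ v) = g ≫ (inv g ≫ inv v) ≫ v := by
          simp only [Category.assoc]
      _ = 0 := by rw [h0, zero_comp, comp_zero]
  obtain ⟨h, hh⟩ := (Bs.prj_spec (inv v ≫ v) (g ≫ inv g)).mp hrt
  have hrE : (g ≫ inv g) ≫ Bs.prj (inv v ≫ v) = g ≫ inv g := by
    rw [hh, Category.assoc, hE.1]
  have hEr : Bs.prj (inv v ≫ v) ≫ (g ≫ inv g) = g ≫ inv g := by
    rw [my_idem_comm inv hinv hE.1 hr_idem, hrE]
  have hkey : ∀ {T : C} (x : T ⟶ B), x ≫ Bs.prj (inv v ≫ v) = 0 → x ≫ inv v ≫ v = x := by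
    intro T x hxE
    have hxr : x ≫ (g ≫ inv g) = 0 := by
      rw [← hEr, ← Category.assoc, hxE, zero_comp]
    have hxg : x ≫ g = 0 := by
      have h3 : x ≫ g = x ≫ (g ≫ inv g) ≫ g := by rw [Category.assoc, (hinv g).1.1]
      rw [h3, ← Category.assoc, hxr, zero_comp]
    obtain ⟨w, hw, -⟩ := hker x hxg
    rw [← hw]
    calc (w ≫ v) ≫ inv v ≫ v = w ≫ (v ≫ inv v) ≫ v := by simp only [Category.assoc]
      _ = w ≫ v := by rw [hvretr, Category.id_comp]
  have hcomm : (p ≫ f ≫ inv v) ≫ v = p ≫ f := by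
    have h4 := hkey (p ≫ f) (by rw [Category.assoc]; exact hpfE)
    calc (p ≫ f ≫ inv v) ≫ v = (p ≫ f) ≫ inv v ≫ v := by simp only [Category.assoc]
      _ = p ≫ f := h4
  have hs : ∀ (s : PullbackCone v f), (s.snd ≫ inv p) ≫ p = s.snd := by
    intro s
    have h0 : s.snd ≫ (f ≫ Bs.prj (inv v ≫ v)) = 0 := by
      calc s.snd ≫ (f ≫ Bs.prj (inv v ≫ v))
          = (s.snd ≫ f) ≫ Bs.prj (inv v ≫ v) := by simp only [Category.assoc]
        _ = (s.fst ≫ v) ≫ Bs.prj (inv v ≫ v) := by rw [s.condition]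
        _ = s.fst ≫ (v ≫ Bs.prj (inv v ≫ v)) := by simp only [Category.assoc]
        _ = 0 := by rw [hvE, comp_zero]
    obtain ⟨h', hh'⟩ := (Bs.prj_spec _ _).mp h0
    rw [hP] at hh'
    rw [hh']
    simp only [Category.assoc]
    rw [(hinv p).1.1]
  refine IsPullback.of_isLimit' ⟨hcomm⟩
    (PullbackCone.IsLimit.mk _ (fun s => s.snd ≫ inv p) (fun s => ?_) (fun s => hs s)
      (fun s m hm1 hm2 => ?_))
  · calc (s.snd ≫ inv p) ≫ (p ≫ f ≫ inv v)
        = ((s.snd ≫ inv p) ≫ p) ≫ (f ≫ inv v) := by simp only [Category.assoc]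
      _ = (s.snd ≫ f) ≫ inv v := by rw [hs s]; simp only [Category.assoc]
      _ = (s.fst ≫ v) ≫ inv v := by rw [s.condition]
      _ = s.fst ≫ (v ≫ inv v) := by simp only [Category.assoc]
      _ = s.fst := by rw [hvretr, Category.comp_id]
  · rw [← cancel_mono p, hm2, hs s]
end

section
/- Let C be an exact inverse category and f : A → B a morphism of C. Then: (i) the inverse image function P′(f) : P(B) → P(A) is injective if and only if f is an epimorphism, and surjective if and only if f is a monomorphism; (ii) P′(f)(0_B) = f′ and P′(f)(1_B) = 1_A; (iii) P′(f)(f ∘ f*) = 1_A. -/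
open CategoryTheory CategoryTheory.Limits

universe v u

variable {C : Type u} [Category.{v} C]

set_option linter.unusedSectionVars false
set_option linter.unusedVariables false

theorem aux_proj_idem {inv : MorphismOp C} {A : C} {j : A ⟶ A}
    (hj : IsProjection inv j) : j ≫ j = j := hj.1

theorem aux_proj_star {inv : MorphismOp C} {A : C} {j : A ⟶ A}
    (hj : IsProjection inv j) : inv j = j := hj.2
section Stmt14Aux

theorem aux_invEq {inv : MorphismOp C} (hinv : IsInverseOp inv) {A B : C} {f : A ⟶ B}
    {g : B ⟶ A} (h1 : f ≫ g ≫ f = f) (h2 : g ≫ f ≫ g = g) : g = inv f :=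
  (hinv f).2 g h1 h2

theorem aux_cic {inv : MorphismOp C} (hinv : IsInverseOp inv) {A B : C} (f : A ⟶ B) :
    f ≫ inv f ≫ f = f := (hinv f).1.1

theorem aux_ici {inv : MorphismOp C} (hinv : IsInverseOp inv) {A B : C} (f : A ⟶ B) :
    inv f ≫ f ≫ inv f = inv f := (hinv f).1.2

theorem aux_inv_inv {inv : MorphismOp C} (hinv : IsInverseOp inv) {A B : C} (f : A ⟶ B) :
    inv (inv f) = f := (aux_invEq hinv (aux_ici hinv f) (aux_cic hinv f)).symm

theorem aux_idem_inv {inv : MorphismOp C} (hinv : IsInverseOp inv) {A : C} {e : A ⟶ A}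
    (he : e ≫ e = e) : inv e = e :=
  (aux_invEq hinv (by rw [he, he]) (by rw [he, he])).symm

theorem aux_idem_comp {inv : MorphismOp C} (hinv : IsInverseOp inv) {A : C} {e f : A ⟶ A}
    (he : e ≫ e = e) (hf : f ≫ f = f) : (e ≫ f) ≫ (e ≫ f) = e ≫ f := by
  have hx1 : (e ≫ f) ≫ inv (e ≫ f) ≫ (e ≫ f) = e ≫ f := aux_cic hinv _
  have hx2 : inv (e ≫ f) ≫ (e ≫ f) ≫ inv (e ≫ f) = inv (e ≫ f) := aux_ici hinv _
  set x := inv (e ≫ f) with hxdef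
  have step1 : f ≫ x ≫ e = x := by
    apply aux_invEq hinv
    · show (e ≫ f) ≫ (f ≫ x ≫ e) ≫ (e ≫ f) = e ≫ f
      simp only [Category.assoc] at hx1 ⊢
      simp only [reassoc_of% hf, reassoc_of% he]
      exact hx1
    · show (f ≫ x ≫ e) ≫ (e ≫ f) ≫ (f ≫ x ≫ e) = f ≫ x ≫ e
      simp only [Category.assoc] at hx2 ⊢
      simp only [reassoc_of% he, reassoc_of% hf, reassoc_of% hx2]
  have step2 : x ≫ x = x := by
    conv_lhs => rw [← step1]
    simp only [Category.assoc] at hx2 ⊢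
    simp only [reassoc_of% hx2]
    exact step1
  have step3 : e ≫ f = x := (aux_invEq hinv hx2 hx1).trans (aux_idem_inv hinv step2)
  rw [step3]; exact step2

theorem aux_idem_comm {inv : MorphismOp C} (hinv : IsInverseOp inv) {A : C} {e f : A ⟶ A}
    (he : e ≫ e = e) (hf : f ≫ f = f) : e ≫ f = f ≫ e := by
  have hef := aux_idem_comp hinv he hf
  have hfe := aux_idem_comp hinv hf he
  have h1 : (e ≫ f) ≫ (f ≫ e) ≫ (e ≫ f) = e ≫ f := by
    simp only [Category.assoc] at hef ⊢
    simp only [reassoc_of% hf, reassoc_of% he]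
    exact hef
  have h2 : (f ≫ e) ≫ (e ≫ f) ≫ (f ≫ e) = f ≫ e := by
    simp only [Category.assoc] at hfe ⊢
    simp only [reassoc_of% he, reassoc_of% hf]
    exact hfe
  exact ((aux_invEq hinv h1 h2).trans (aux_idem_inv hinv hef)).symm

theorem aux_inv_comp {inv : MorphismOp C} (hinv : IsInverseOp inv) {A B D : C}
    (f : A ⟶ B) (g : B ⟶ D) : inv (f ≫ g) = inv g ≫ inv f := by
  have i1 : (g ≫ inv g) ≫ (g ≫ inv g) = g ≫ inv g := by
    simp only [Category.assoc]; rw [aux_ici hinv g]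
  have i2 : (inv f ≫ f) ≫ (inv f ≫ f) = inv f ≫ f := by
    simp only [Category.assoc]; rw [aux_cic hinv f]
  have hc := aux_idem_comm hinv i1 i2
  refine (aux_invEq hinv ?_ ?_).symm
  · show (f ≫ g) ≫ (inv g ≫ inv f) ≫ (f ≫ g) = f ≫ g
    simp only [Category.assoc]
    rw [reassoc_of% hc, reassoc_of% (aux_cic hinv f), aux_cic hinv g]
  · show (inv g ≫ inv f) ≫ (f ≫ g) ≫ (inv g ≫ inv f) = inv g ≫ inv f
    simp only [Category.assoc]
    rw [reassoc_of% hc.symm, reassoc_of% (aux_ici hinv g), aux_ici hinv f]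

theorem aux_inv_zero [HasZeroMorphisms C] {inv : MorphismOp C} (hinv : IsInverseOp inv)
    {A B : C} : inv (0 : A ⟶ B) = 0 :=
  (aux_invEq hinv (by simp) (by simp)).symm

end Stmt14Aux
section Stmt14Aux2
variable [HasZeroObject C] [HasZeroMorphisms C]

theorem aux_prj_comp {inv : MorphismOp C} (Bs : BaerStar C inv) {A B : C} (f : A ⟶ B) :
    Bs.prj f ≫ f = 0 :=
  (Bs.prj_spec f (Bs.prj f)).mpr ⟨𝟙 A, (Category.id_comp _).symm⟩

theorem aux_prj_fix {inv : MorphismOp C} (Bs : BaerStar C inv) {A B X : C} (f : A ⟶ B)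
    (g : X ⟶ A) : g ≫ f = 0 ↔ g ≫ Bs.prj f = g := by
  constructor
  · intro h
    obtain ⟨h', hh'⟩ := (Bs.prj_spec f g).mp h
    rw [hh', Category.assoc, (Bs.prj_isProjection f).1]
  · intro h
    rw [← h, Category.assoc, aux_prj_comp Bs f, comp_zero]

theorem aux_prj_zero {inv : MorphismOp C} (Bs : BaerStar C inv) {A B : C} :
    Bs.prj (0 : A ⟶ B) = 𝟙 A := by
  have := (aux_prj_fix Bs (0 : A ⟶ B) (𝟙 A)).mp (by simp)
  simpa using this

theorem aux_prj_id {inv : MorphismOp C} (Bs : BaerStar C inv) {B : C} :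
    Bs.prj (𝟙 B) = 0 := by
  have := aux_prj_comp Bs (𝟙 B)
  simpa using this

theorem aux_comp_prj {inv : MorphismOp C} (hinv : IsInverseOp inv) (Bs : BaerStar C inv)
    {B : C} {j : B ⟶ B} (hj : IsProjection inv j) : j ≫ Bs.prj j = 0 := by
  have h0 := aux_prj_comp Bs j
  calc j ≫ Bs.prj j = inv (Bs.prj j ≫ j) := by
        rw [aux_inv_comp hinv, aux_proj_star hj, aux_proj_star (Bs.prj_isProjection j)]
    _ = 0 := by rw [h0, aux_inv_zero hinv]

theorem aux_prj_ext {inv : MorphismOp C} (hinv : IsInverseOp inv) (Bs : BaerStar C inv)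
    {A B D : C} {f₁ : A ⟶ B} {f₂ : A ⟶ D}
    (h : ∀ {X : C} (x : X ⟶ A), x ≫ f₁ = 0 ↔ x ≫ f₂ = 0) : Bs.prj f₁ = Bs.prj f₂ := by
  have h1 : Bs.prj f₁ ≫ Bs.prj f₂ = Bs.prj f₁ :=
    (aux_prj_fix Bs f₂ _).mp ((h _).mp (aux_prj_comp Bs f₁))
  have h2 : Bs.prj f₂ ≫ Bs.prj f₁ = Bs.prj f₂ :=
    (aux_prj_fix Bs f₁ _).mp ((h _).mpr (aux_prj_comp Bs f₂))
  have hcomm := aux_idem_comm hinv (Bs.prj_isProjection f₁).1 (Bs.prj_isProjection f₂).1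
  rw [← h1, hcomm, h2]

theorem aux_kernel_mono {K A B : C} {u : K ⟶ A} {f : A ⟶ B} (hu : IsKernelOf u f) :
    Mono u := by
  constructor
  intro Z a b hab
  have h0 : (a ≫ u) ≫ f = 0 := by rw [Category.assoc, hu.1, comp_zero]
  obtain ⟨h, hh, huniq⟩ := hu.2 (a ≫ u) h0
  rw [huniq a rfl, huniq b hab.symm]

theorem aux_mono_comp_inv {inv : MorphismOp C} (hinv : IsInverseOp inv) {A B : C}
    {f : A ⟶ B} (h : Mono f) : f ≫ inv f = 𝟙 A := by
  haveI := h
  rw [← cancel_mono f]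
  simpa [Category.assoc] using aux_cic hinv f

theorem aux_mono_of {inv : MorphismOp C} (hinv : IsInverseOp inv) {A B : C} {f : A ⟶ B}
    (h : f ≫ inv f = 𝟙 A) : Mono f := by
  constructor
  intro Z a b hab
  have h2 : (a ≫ f) ≫ inv f = (b ≫ f) ≫ inv f := by rw [hab]
  simp only [Category.assoc, h, Category.comp_id] at h2
  exact h2

theorem aux_epi_inv_comp {inv : MorphismOp C} (hinv : IsInverseOp inv) {A B : C}
    {f : A ⟶ B} (h : Epi f) : inv f ≫ f = 𝟙 B := by
  haveI := h
  rw [← cancel_epi f]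
  simpa using aux_cic hinv f

theorem aux_epi_of {inv : MorphismOp C} (hinv : IsInverseOp inv) {A B : C} {f : A ⟶ B}
    (h : inv f ≫ f = 𝟙 B) : Epi f := by
  constructor
  intro Z a b hab
  have h2 : inv f ≫ f ≫ a = inv f ≫ f ≫ b := by rw [hab]
  simp only [← Category.assoc, h, Category.id_comp] at h2
  exact h2

theorem aux_prj_of_kernel {inv : MorphismOp C} (hinv : IsInverseOp inv)
    (Bs : BaerStar C inv) {K A B : C} {u : K ⟶ A} {f : A ⟶ B} (hu : IsKernelOf u f) :
    Bs.prj f = inv u ≫ u := by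
  have hm : Mono u := aux_kernel_mono hu
  have huiu : u ≫ inv u = 𝟙 K := aux_mono_comp_inv hinv hm
  have he : (inv u ≫ u) ≫ (inv u ≫ u) = inv u ≫ u := by
    simp only [Category.assoc]; rw [reassoc_of% (aux_ici hinv u)]
  have h1 : (inv u ≫ u) ≫ f = 0 := by rw [Category.assoc, hu.1, comp_zero]
  have h2 : (inv u ≫ u) ≫ Bs.prj f = inv u ≫ u := (aux_prj_fix Bs f _).mp h1
  obtain ⟨h, hh, _⟩ := hu.2 (Bs.prj f) (aux_prj_comp Bs f)
  have h3 : Bs.prj f ≫ (inv u ≫ u) = Bs.prj f := by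
    rw [← hh]
    simp only [Category.assoc]
    rw [reassoc_of% huiu]
  have hcomm := aux_idem_comm hinv (Bs.prj_isProjection f).1 he
  rw [← h3, hcomm, h2]

end Stmt14Aux2
section Stmt14Aux3
variable [HasZeroObject C] [HasZeroMorphisms C]

theorem aux_core (hC : IsExactCategory C) {B : C} {j : B ⟶ B} (hj : j ≫ j = j)
    {K : C} {u : K ⟶ B} (hu : IsKernelOf u j) {X : C} {g : B ⟶ X} (hg : u ≫ g = 0) :
    j ≫ g = g := by
  obtain ⟨I, q, p, hq, hp, hqp⟩ := hC.monoEpiFact j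
  haveI := hq; haveI := hp
  have hpq : p ≫ q = 𝟙 I := by
    rw [← cancel_mono p, ← cancel_epi q]
    have hj' : q ≫ p ≫ q ≫ p = q ≫ p := by
      rw [← hqp] at hj
      simpa [Category.assoc] using hj
    simpa [Category.assoc] using hj'
  obtain ⟨X₀, f₁, hck⟩ := hC.conormal q hq
  have hf₁j : f₁ ≫ j = 0 := by rw [← hqp, ← Category.assoc, hck.1, zero_comp]
  obtain ⟨h₀, hh₀, _⟩ := hu.2 f₁ hf₁j
  have hf₁g : f₁ ≫ g = 0 := by rw [← hh₀, Category.assoc, hg, comp_zero]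
  obtain ⟨g', hg', _⟩ := hck.2 g hf₁g
  rw [← hg', ← hqp]
  simp only [Category.assoc]
  rw [reassoc_of% hpq]

theorem aux_core_star {inv : MorphismOp C} (hinv : IsInverseOp inv)
    (hC : IsExactCategory C) {B : C} {j : B ⟶ B} (hj : IsProjection inv j)
    {K : C} {u : K ⟶ B} (hu : IsKernelOf u j) {X : C} {x : X ⟶ B}
    (hx : x ≫ inv u = 0) : x ≫ j = x := by
  have h1 : u ≫ inv x = 0 := by
    calc u ≫ inv x = inv (x ≫ inv u) := by
          rw [aux_inv_comp hinv, aux_inv_inv hinv]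
      _ = 0 := by rw [hx, aux_inv_zero hinv]
  have h2 : j ≫ inv x = inv x := aux_core hC hj.1 hu h1
  calc x ≫ j = inv (inv (x ≫ j)) := (aux_inv_inv hinv _).symm
    _ = inv (j ≫ inv x) := by rw [aux_inv_comp hinv, aux_proj_star hj]
    _ = inv (inv x) := by rw [h2]
    _ = x := aux_inv_inv hinv x

theorem aux_L1 {inv : MorphismOp C} (hinv : IsInverseOp inv) (hC : IsExactCategory C)
    (Bs : BaerStar C inv) {B : C} {j : B ⟶ B} (hj : IsProjection inv j) {X : C}
    (x : X ⟶ B) : x ≫ Bs.prj j = 0 ↔ x ≫ j = x := by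
  obtain ⟨K, u, hu⟩ := hC.hasKernels j
  have hprj : Bs.prj j = inv u ≫ u := aux_prj_of_kernel hinv Bs hu
  constructor
  · intro h
    have hx : x ≫ inv u = 0 := by
      calc x ≫ inv u = x ≫ inv u ≫ u ≫ inv u := by rw [aux_ici hinv u]
        _ = (x ≫ Bs.prj j) ≫ inv u := by rw [hprj]; simp only [Category.assoc]
        _ = 0 := by rw [h, zero_comp]
    exact aux_core_star hinv hC hj hu hx
  · intro h
    rw [← h, Category.assoc, aux_comp_prj hinv Bs hj, comp_zero]

theorem aux_C1 {inv : MorphismOp C} (hinv : IsInverseOp inv) (hC : IsExactCategory C)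
    (Bs : BaerStar C inv) {B : C} {j : B ⟶ B} (hj : IsProjection inv j) :
    Bs.prj (Bs.prj j) = j := by
  have hjpp := Bs.prj_isProjection (Bs.prj j)
  have h1 : j ≫ Bs.prj (Bs.prj j) = j :=
    (aux_prj_fix Bs _ j).mp (aux_comp_prj hinv Bs hj)
  have h2 : Bs.prj (Bs.prj j) ≫ j = Bs.prj (Bs.prj j) :=
    (aux_L1 hinv hC Bs hj _).mp (aux_prj_comp Bs (Bs.prj j))
  have hcomm := aux_idem_comm hinv hj.1 hjpp.1
  rw [← h2, ← hcomm, h1]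

theorem aux_char {inv : MorphismOp C} (hinv : IsInverseOp inv) (hC : IsExactCategory C)
    (Bs : BaerStar C inv) {A B X : C} (f : A ⟶ B) {j : B ⟶ B}
    (hj : IsProjection inv j) (x : X ⟶ A) :
    x ≫ Bs.prj (f ≫ Bs.prj j) = x ↔ (x ≫ f) ≫ j = x ≫ f := by
  constructor
  · intro h
    have h0 : (x ≫ f) ≫ Bs.prj j = 0 := by
      have h1 := (aux_prj_fix Bs (f ≫ Bs.prj j) x).mpr h
      simpa [Category.assoc] using h1
    exact (aux_L1 hinv hC Bs hj (x ≫ f)).mp h0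
  · intro h
    have h0 : (x ≫ f) ≫ Bs.prj j = 0 := (aux_L1 hinv hC Bs hj (x ≫ f)).mpr h
    exact (aux_prj_fix Bs (f ≫ Bs.prj j) x).mp (by simpa [Category.assoc] using h0)

end Stmt14Aux3
/-- In an exact inverse category: (i) `P′(f)` is injective iff `f` is
epi and surjective iff `f` is mono; (ii) `P′(f)(0) = f′` and `P′(f)(1) = 1`;
(iii) `P′(f)(f ∘ f*) = 1`, where `P′(f)(j) = (j′ ∘ f)′`. -/
theorem stmt14 [HasZeroObject C] [HasZeroMorphisms C] (inv : MorphismOp C)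
    (hinv : IsInverseOp inv) (hC : IsExactCategory C) (Bs : BaerStar C inv)
    {A B : C} (f : A ⟶ B) :
    ((∀ j₁ j₂ : B ⟶ B, IsProjection inv j₁ → IsProjection inv j₂ →
        Bs.prj (f ≫ Bs.prj j₁) = Bs.prj (f ≫ Bs.prj j₂) → j₁ = j₂) ↔ Epi f) ∧
    ((∀ i : A ⟶ A, IsProjection inv i →
        ∃ j : B ⟶ B, IsProjection inv j ∧ Bs.prj (f ≫ Bs.prj j) = i) ↔ Mono f) ∧
    Bs.prj (f ≫ Bs.prj (0 : B ⟶ B)) = Bs.prj f ∧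
    Bs.prj (f ≫ Bs.prj (𝟙 B)) = 𝟙 A ∧
    Bs.prj (f ≫ Bs.prj (inv f ≫ f)) = 𝟙 A := by
  have hzero : Bs.prj (f ≫ Bs.prj (0 : B ⟶ B)) = Bs.prj f := by
    rw [aux_prj_zero Bs, Category.comp_id]
  have hone : Bs.prj (f ≫ Bs.prj (𝟙 B)) = 𝟙 A := by
    rw [aux_prj_id Bs, comp_zero, aux_prj_zero Bs]
  have hiii : Bs.prj (f ≫ Bs.prj (inv f ≫ f)) = 𝟙 A := by
    have h0 := aux_prj_comp Bs (inv f ≫ f)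
    have h1 : Bs.prj (inv f ≫ f) ≫ inv f = 0 := by
      calc Bs.prj (inv f ≫ f) ≫ inv f
          = Bs.prj (inv f ≫ f) ≫ inv f ≫ f ≫ inv f := by rw [aux_ici hinv f]
        _ = (Bs.prj (inv f ≫ f) ≫ (inv f ≫ f)) ≫ inv f := by simp only [Category.assoc]
        _ = 0 := by rw [h0, zero_comp]
    have h2 : f ≫ Bs.prj (inv f ≫ f) = 0 := by
      calc f ≫ Bs.prj (inv f ≫ f) = inv (Bs.prj (inv f ≫ f) ≫ inv f) := by
            rw [aux_inv_comp hinv, aux_proj_star (Bs.prj_isProjection _), aux_inv_inv hinv]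
        _ = 0 := by rw [h1, aux_inv_zero hinv]
    rw [h2, aux_prj_zero Bs]
  have hepi_iff : (∀ j₁ j₂ : B ⟶ B, IsProjection inv j₁ → IsProjection inv j₂ →
      Bs.prj (f ≫ Bs.prj j₁) = Bs.prj (f ≫ Bs.prj j₂) → j₁ = j₂) ↔ Epi f := by
    constructor
    · intro hinj
      have hp1 : IsProjection inv (𝟙 B) :=
        ⟨Category.id_comp _, aux_idem_inv hinv (Category.id_comp _)⟩
      have hidem : (inv f ≫ f) ≫ (inv f ≫ f) = inv f ≫ f := by
        simp only [Category.assoc]; rw [aux_cic hinv f]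
      have hp2 : IsProjection inv (inv f ≫ f) := ⟨hidem, aux_idem_inv hinv hidem⟩
      exact aux_epi_of hinv (hinj _ _ hp2 hp1 (hiii.trans hone.symm))
    · intro hepi j₁ j₂ hj₁ hj₂ heq
      have hq : inv f ≫ f = 𝟙 B := aux_epi_inv_comp hinv hepi
      have recov : ∀ (j : B ⟶ B), IsProjection inv j →
          inv f ≫ Bs.prj (f ≫ Bs.prj j) ≫ f = j := by
        intro j hj
        set i := Bs.prj (f ≫ Bs.prj j) with hidef
        have hi := Bs.prj_isProjection (f ≫ Bs.prj j)
        have hchar := fun {X : C} (x : X ⟶ A) => aux_char hinv hC Bs f hj x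
        have a1 : (i ≫ f) ≫ j = i ≫ f := (hchar i).mp hi.1
        have b1 : (j ≫ inv f) ≫ i = j ≫ inv f := by
          apply (hchar (j ≫ inv f)).mpr
          have hx : (j ≫ inv f) ≫ f = j := by rw [Category.assoc, hq, Category.comp_id]
          rw [hx]; exact hj.1
        have hjt_j : (inv f ≫ i ≫ f) ≫ j = inv f ≫ i ≫ f := by
          simp only [Category.assoc] at a1 ⊢
          rw [a1]
        have hj_jt : j ≫ inv f ≫ i ≫ f = j := by
          rw [reassoc_of% b1, hq, Category.comp_id]
        have e_idem : (f ≫ inv f) ≫ (f ≫ inv f) = f ≫ inv f := by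
          simp only [Category.assoc]; rw [aux_ici hinv f]
        have hcom := aux_idem_comm hinv hi.1 e_idem
        have hjt_idem : (inv f ≫ i ≫ f) ≫ (inv f ≫ i ≫ f) = inv f ≫ i ≫ f := by
          calc (inv f ≫ i ≫ f) ≫ (inv f ≫ i ≫ f)
              = inv f ≫ (i ≫ (f ≫ inv f)) ≫ i ≫ f := by simp only [Category.assoc]
            _ = inv f ≫ ((f ≫ inv f) ≫ i) ≫ i ≫ f := by rw [hcom]
            _ = inv f ≫ i ≫ f := by
                simp only [Category.assoc]
                rw [reassoc_of% hi.1, reassoc_of% (aux_ici hinv f)]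
        have hcomj := aux_idem_comm hinv hj.1 hjt_idem
        show inv f ≫ i ≫ f = j
        rw [← hjt_j, ← hcomj]
        exact hj_jt
      rw [← recov j₁ hj₁, heq, recov j₂ hj₂]
  have hmono_iff : (∀ i : A ⟶ A, IsProjection inv i →
      ∃ j : B ⟶ B, IsProjection inv j ∧ Bs.prj (f ≫ Bs.prj j) = i) ↔ Mono f := by
    constructor
    · intro hsurj
      obtain ⟨j, hj, hji⟩ := hsurj 0 ⟨zero_comp, aux_inv_zero hinv⟩
      have h1 : Bs.prj f ≫ (f ≫ Bs.prj j) = 0 := by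
        rw [← Category.assoc, aux_prj_comp Bs f, zero_comp]
      have h2 : Bs.prj f = 0 := by
        have h3 := (aux_prj_fix Bs (f ≫ Bs.prj j) (Bs.prj f)).mp h1
        rw [hji, comp_zero] at h3
        exact h3.symm
      have hext : Bs.prj (f ≫ inv f) = Bs.prj f := by
        apply aux_prj_ext hinv Bs
        intro X x
        constructor
        · intro h
          calc x ≫ f = x ≫ f ≫ inv f ≫ f := by rw [aux_cic hinv f]
            _ = (x ≫ (f ≫ inv f)) ≫ f := by simp only [Category.assoc]
            _ = 0 := by rw [h, zero_comp]
        · intro h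
          rw [← Category.assoc, h, zero_comp]
      have he_idem : (f ≫ inv f) ≫ (f ≫ inv f) = f ≫ inv f := by
        simp only [Category.assoc]; rw [aux_ici hinv f]
      have hep : IsProjection inv (f ≫ inv f) := ⟨he_idem, aux_idem_inv hinv he_idem⟩
      have hfid : f ≫ inv f = 𝟙 A := by
        have hc1 := aux_C1 hinv hC Bs hep
        rw [hext, h2, aux_prj_zero Bs] at hc1
        exact hc1.symm
      exact aux_mono_of hinv hfid
    · intro hmono i hi
      have hm : f ≫ inv f = 𝟙 A := aux_mono_comp_inv hinv hmono
      have hj_idem : (inv f ≫ i ≫ f) ≫ (inv f ≫ i ≫ f) = inv f ≫ i ≫ f := by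
        simp only [Category.assoc]
        rw [reassoc_of% hm, reassoc_of% hi.1]
      have hj_star : inv (inv f ≫ i ≫ f) = inv f ≫ i ≫ f := by
        rw [aux_inv_comp hinv, aux_inv_comp hinv, aux_inv_inv hinv, aux_proj_star hi,
          Category.assoc]
      have hjp : IsProjection inv (inv f ≫ i ≫ f) := ⟨hj_idem, hj_star⟩
      refine ⟨inv f ≫ i ≫ f, hjp, ?_⟩
      have hi₀ := Bs.prj_isProjection (f ≫ Bs.prj (inv f ≫ i ≫ f))
      have hchar := fun {X : C} (x : X ⟶ A) => aux_char hinv hC Bs f hjp x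
      have claim : ∀ {X : C} (x : X ⟶ A),
          ((x ≫ f) ≫ (inv f ≫ i ≫ f) = x ≫ f) ↔ x ≫ i = x := by
        intro X x
        constructor
        · intro h
          simp only [Category.assoc] at h
          simp only [reassoc_of% hm, Category.id_comp] at h
          have h2 := congrArg (fun t => t ≫ inv f) h
          simp only [Category.assoc] at h2
          simp only [hm, Category.comp_id] at h2
          exact h2
        · intro h
          calc (x ≫ f) ≫ inv f ≫ i ≫ f = x ≫ i ≫ f := by
                simp only [Category.assoc]
                simp only [reassoc_of% hm, Category.id_comp]
            _ = (x ≫ i) ≫ f := (Category.assoc x i f).symm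
            _ = x ≫ f := by rw [h]
      set i₀ := Bs.prj (f ≫ Bs.prj (inv f ≫ i ≫ f)) with hi0def
      have hA : i ≫ i₀ = i := (hchar i).mpr ((claim i).mpr hi.1)
      have hB : i₀ ≫ i = i₀ := (claim i₀).mp ((hchar i₀).mp hi₀.1)
      have hcomm := aux_idem_comm hinv hi₀.1 hi.1
      rw [← hB, hcomm, hA]
  exact ⟨hepi_iff, hmono_iff, hzero, hone, hiii⟩
end
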